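/- (The bump deformation decreases the truncated four-derivative gravitational entropy of a line; the Appendix claim with L₁ = L₂ = 5, α = 10, λ = 1, ℓ = 1.) Let f : ℝ → ℝ be defined by f(y) = 5·exp(−10/(1 − y²/25)) for |y| < 5 and f(y) = 0 otherwise (a smooth bump function). Then ∫_{−5}^{5} √(1 + f′(y)²) · (1 − f″(y)² / (2·(1 + f′(y)²)³)) dy < 10, i.e. the truncated gravitational entropy functional S = ∫ √h·(1 − K²/2) evaluated on the graph of f over the interval [−5, 5] is strictly smaller than its value 10 on the undeformed straight line. -/

import Mathlib

open intervalIntegral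

/-- The bump function deformation of the straight line: f(y) = 5 exp(−10/(1 − y²/25))
for |y| < 5 and f(y) = 0 otherwise. -/
noncomputable def bump (y : ℝ) : ℝ :=
  if |y| < 5 then 5 * Real.exp (-10 / (1 - y ^ 2 / 25)) else 0

noncomputable def gf (y : ℝ) : ℝ :=
  (-4 * y / (1 - y ^ 2 / 25) ^ 2) * Real.exp (-(10 / (1 - y ^ 2 / 25)))

noncomputable def hf (y : ℝ) : ℝ :=
  ((16 * y ^ 2 / 5 - 4 * (1 - y ^ 2 / 25) * (1 - y ^ 2 / 25 + 4 * y ^ 2 / 25))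
      / (1 - y ^ 2 / 25) ^ 4) * Real.exp (-(10 / (1 - y ^ 2 / 25)))

lemma upos {y : ℝ} (hy : y ^ 2 < 25) : 0 < 1 - y ^ 2 / 25 := by nlinarith

lemma uopen : IsOpen {y : ℝ | y ^ 2 < 25} :=
  isOpen_lt (by fun_prop) continuous_const

lemma hasDerivAt_inner {y : ℝ} (hy : y ^ 2 < 25) :
    HasDerivAt (fun x : ℝ => -10 / (1 - x ^ 2 / 25))
      (-10 * (2 * y / 25) / (1 - y ^ 2 / 25) ^ 2) y := by
  have hu : HasDerivAt (fun x : ℝ => 1 - x ^ 2 / 25) (-(2 * y / 25)) y := by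
    simpa using ((hasDerivAt_pow 2 y).div_const 25).const_sub 1
  have hne := (upos hy).ne'
  have h := (hu.inv hne).const_mul (-10)
  have heq : (fun x : ℝ => -10 * (1 - x ^ 2 / 25)⁻¹) = fun x : ℝ => -10 / (1 - x ^ 2 / 25) := by
    funext x; ring
  change HasDerivAt (fun x : ℝ => -10 * (1 - x ^ 2 / 25)⁻¹) _ y at h
  rw [heq] at h
  convert h using 1
  ring

lemma hasDerivAt_expinner {y : ℝ} (hy : y ^ 2 < 25) :
    HasDerivAt (fun x : ℝ => Real.exp (-10 / (1 - x ^ 2 / 25)))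
      (Real.exp (-10 / (1 - y ^ 2 / 25)) * (-10 * (2 * y / 25) / (1 - y ^ 2 / 25) ^ 2)) y :=
  (hasDerivAt_inner hy).exp

lemma hasDerivAt_bump {y : ℝ} (hy : y ^ 2 < 25) : HasDerivAt bump (gf y) y := by
  have hmem : {y : ℝ | y ^ 2 < 25} ∈ nhds y := uopen.mem_nhds hy
  have hev : bump =ᶠ[nhds y] fun x => 5 * Real.exp (-10 / (1 - x ^ 2 / 25)) := by
    filter_upwards [hmem] with x hx
    have : |x| < 5 := by rw [abs_lt]; constructor <;> nlinarith [hx]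
    simp [bump, this]
  have h := (hasDerivAt_expinner hy).const_mul 5
  have h2 : HasDerivAt bump (5 * (Real.exp (-10 / (1 - y ^ 2 / 25)) * (-10 * (2 * y / 25) / (1 - y ^ 2 / 25) ^ 2))) y :=
    h.congr_of_eventuallyEq hev
  convert h2 using 1
  have hne := (upos hy).ne'
  rw [gf, show -(10 / (1 - y ^ 2 / 25)) = -10 / (1 - y ^ 2 / 25) from (neg_div _ _).symm]
  set u := 1 - y ^ 2 / 25 with hu
  field_simp
  ring

lemma hasDerivAt_gf {y : ℝ} (hy : y ^ 2 < 25) : HasDerivAt gf (hf y) y := by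
  have hne := (upos hy).ne'
  have hu : HasDerivAt (fun x : ℝ => 1 - x ^ 2 / 25) (-(2 * y / 25)) y := by
    simpa using ((hasDerivAt_pow 2 y).div_const 25).const_sub 1
  have hden : HasDerivAt (fun x : ℝ => (1 - x ^ 2 / 25) ^ 2)
      (2 * (1 - y ^ 2 / 25) ^ 1 * -(2 * y / 25)) y := hu.pow 2
  have hnum : HasDerivAt (fun x : ℝ => -4 * x * Real.exp (-10 / (1 - x ^ 2 / 25)))
      (-4 * Real.exp (-10 / (1 - y ^ 2 / 25)) +
        -4 * y * (Real.exp (-10 / (1 - y ^ 2 / 25)) * (-10 * (2 * y / 25) / (1 - y ^ 2 / 25) ^ 2))) y := by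
    have := ((hasDerivAt_id y).const_mul (-4 : ℝ)).fun_mul (hasDerivAt_expinner hy)
    refine this.congr_deriv ?_
    simp [id]
  have hne2 : ((1 : ℝ) - y ^ 2 / 25) ^ 2 ≠ 0 := pow_ne_zero 2 hne
  have hdiv := hnum.fun_div hden hne2
  have heq : gf = fun x : ℝ =>
      (-4 * x * Real.exp (-10 / (1 - x ^ 2 / 25))) / (1 - x ^ 2 / 25) ^ 2 := by
    funext x
    rw [gf, show -(10 / (1 - x ^ 2 / 25)) = -10 / (1 - x ^ 2 / 25) by ring]
    ring
  rw [heq]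
  refine hdiv.congr_deriv ?_
  rw [hf, show -(10 / (1 - y ^ 2 / 25)) = -10 / (1 - y ^ 2 / 25) from (neg_div _ _).symm]
  set u := 1 - y ^ 2 / 25 with hu
  field_simp
  ring

lemma deriv_bump_eq {y : ℝ} (hy : y ^ 2 < 25) : deriv bump y = gf y :=
  (hasDerivAt_bump hy).deriv

lemma deriv2_bump_eq {y : ℝ} (hy : y ^ 2 < 25) : deriv (deriv bump) y = hf y := by
  have hev : deriv bump =ᶠ[nhds y] gf := by
    filter_upwards [uopen.mem_nhds hy] with x hx
    exact deriv_bump_eq hx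
  rw [hev.deriv_eq]
  exact (hasDerivAt_gf hy).deriv

/-- Exponential decay beats powers: for `0 < u ≤ u0 ≤ 1`,
`exp (-(20/u)) ≤ exp (-(20/u0)) * (u/u0)^8`. -/
lemma expdecay {u u0 : ℝ} (h0 : 0 < u) (hu : u ≤ u0) (h1 : u0 ≤ 1) :
    Real.exp (-(20 / u)) ≤ Real.exp (-(20 / u0)) * (u / u0) ^ 8 := by
  have h00 : 0 < u0 := lt_of_lt_of_le h0 hu
  set t : ℝ := 20 / u - 20 / u0 with ht
  have ht0 : 0 ≤ t := by
    rw [ht, sub_nonneg, div_le_div_iff₀ h00 h0]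
    nlinarith
  have h8 : u0 / u ≤ Real.exp (t / 8) := by
    have h := Real.add_one_le_exp (t / 8)
    have : u0 / u ≤ t / 8 + 1 := by
      rw [div_le_iff₀ h0]
      have expand : (t / 8 + 1) * u = (20 * u0 - 20 * u) / (8 * u0) + u := by
        rw [ht]; field_simp
      rw [expand]
      have hkey : (20 * u0 - 20 * u) / (8 * u0) + u - u0 = ((u0 - u) * (20 - 8 * u0)) / (8 * u0) := by
        field_simp; ring
      have hnn : (0:ℝ) ≤ ((u0 - u) * (20 - 8 * u0)) / (8 * u0) := by
        apply div_nonneg (mul_nonneg (by linarith) (by linarith)) (by linarith)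
      linarith
    linarith
  have h9 : (u0 / u) ^ 8 ≤ Real.exp t := by
    calc (u0 / u) ^ 8 ≤ Real.exp (t / 8) ^ 8 := by
          apply pow_le_pow_left₀ (by positivity) h8
      _ = Real.exp t := by
          rw [← Real.exp_nat_mul]; congr 1; push_cast; ring
  have hmul : Real.exp (-t) * Real.exp t = 1 := by
    rw [← Real.exp_add]; simp
  have hx : Real.exp (-(20 / u)) = Real.exp (-(20 / u0)) * Real.exp (-t) := by
    rw [← Real.exp_add]; congr 1; rw [ht]; ring
  rw [hx]
  have hfin : Real.exp (-t) ≤ (u / u0) ^ 8 := by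
    have hid : (u / u0) ^ 8 * (u0 / u) ^ 8 = 1 := by
      field_simp
    nlinarith [mul_le_mul_of_nonneg_left h9 (Real.exp_pos (-t)).le,
      Real.exp_pos (-t), pow_pos (div_pos h0 h00) 8]
  exact mul_le_mul_of_nonneg_left hfin (Real.exp_pos _).le

/-- Taylor bound for `exp (-r)` on `[0,1]`. -/
lemma expTaylor {r : ℝ} (h0 : 0 ≤ r) (h1 : r ≤ 1) :
    |Real.exp (-r) - (1 - r + r ^ 2 / 2 - r ^ 3 / 6 + r ^ 4 / 24 - r ^ 5 / 120 + r ^ 6 / 720 - r ^ 7 / 5040)| ≤ 1 / 35840 := by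
  have habs : |(-r : ℝ)| ≤ 1 := by rw [abs_neg, abs_of_nonneg h0]; exact h1
  have h := Real.exp_bound habs (n := 8) (by norm_num)
  have hsum : ∑ m ∈ Finset.range 8, (-r) ^ m / m.factorial
      = 1 - r + r ^ 2 / 2 - r ^ 3 / 6 + r ^ 4 / 24 - r ^ 5 / 120 + r ^ 6 / 720 - r ^ 7 / 5040 := by
    simp [Finset.sum_range_succ, Nat.factorial]
    ring
  rw [hsum] at h
  have hr8 : |(-r : ℝ)| ^ 8 ≤ 1 := pow_le_one₀ (abs_nonneg _) habs
  have : |(-r : ℝ)| ^ 8 * ((8 : ℕ).succ / ((8 : ℕ).factorial * 8)) ≤ 1 / 35840 := by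
    have : ((8 : ℕ).succ / ((8 : ℕ).factorial * 8) : ℝ) = 1 / 35840 := by
      norm_num [Nat.factorial]
    rw [this]
    nlinarith [abs_nonneg (-r : ℝ)]
  linarith
lemma exp_neg_one_lb : (0.3678794411 : ℝ) ≤ Real.exp (-1) := by
  rw [Real.exp_neg]
  rw [le_inv_comm₀ (by norm_num) (Real.exp_pos 1)]
  calc Real.exp 1 ≤ 2.7182818286 := Real.exp_one_lt_d9.le
    _ ≤ (0.3678794411 : ℝ)⁻¹ := by norm_num

lemma exp_neg_one_ub : Real.exp (-1) ≤ (0.36787944121 : ℝ) := by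
  rw [Real.exp_neg]
  rw [inv_le_comm₀ (Real.exp_pos 1) (by norm_num)]
  calc (0.36787944121 : ℝ)⁻¹ ≤ 2.7182818283 := by norm_num
    _ ≤ Real.exp 1 := Real.exp_one_gt_d9.le

lemma exp_neg_nat (m : ℕ) :
    (0.3678794411 : ℝ) ^ m ≤ Real.exp (-(m : ℝ)) ∧ Real.exp (-(m : ℝ)) ≤ (0.36787944121 : ℝ) ^ m := by
  have h : Real.exp (-(m : ℝ)) = Real.exp (-1) ^ m := by
    rw [← Real.exp_nat_mul]; norm_num
  rw [h]
  constructor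
  · exact pow_le_pow_left₀ (by norm_num) exp_neg_one_lb m
  · exact pow_le_pow_left₀ (Real.exp_pos _).le exp_neg_one_ub m

/-- Master two-sided bound for `exp (-q)` with `q = m + r`, `m : ℕ`, `r ∈ [0,1]`. -/
lemma epb (m : ℕ) (q r lo hi : ℝ) (hq : q = m + r) (h0 : 0 ≤ r) (h1 : r ≤ 1)
    (hT0 : 0 ≤ 1 - r + r ^ 2 / 2 - r ^ 3 / 6 + r ^ 4 / 24 - r ^ 5 / 120 + r ^ 6 / 720 - r ^ 7 / 5040 - 1 / 35840)
    (hlo : lo ≤ (0.3678794411 : ℝ) ^ m *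
      (1 - r + r ^ 2 / 2 - r ^ 3 / 6 + r ^ 4 / 24 - r ^ 5 / 120 + r ^ 6 / 720 - r ^ 7 / 5040 - 1 / 35840))
    (hhi : (0.36787944121 : ℝ) ^ m *
      (1 - r + r ^ 2 / 2 - r ^ 3 / 6 + r ^ 4 / 24 - r ^ 5 / 120 + r ^ 6 / 720 - r ^ 7 / 5040 + 1 / 35840) ≤ hi) :
    lo ≤ Real.exp (-q) ∧ Real.exp (-q) ≤ hi := by
  set T : ℝ := 1 - r + r ^ 2 / 2 - r ^ 3 / 6 + r ^ 4 / 24 - r ^ 5 / 120 + r ^ 6 / 720 - r ^ 7 / 5040 with hT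
  have hsplit : Real.exp (-q) = Real.exp (-(m : ℝ)) * Real.exp (-r) := by
    rw [← Real.exp_add]; congr 1; rw [hq]; ring
  obtain ⟨hm1, hm2⟩ := exp_neg_nat m
  have ht := expTaylor h0 h1
  rw [abs_le] at ht
  have hr1 : T - 1 / 35840 ≤ Real.exp (-r) := by linarith [ht.1]
  have hr2 : Real.exp (-r) ≤ T + 1 / 35840 := by linarith [ht.2]
  have hmpos : (0:ℝ) ≤ (0.3678794411 : ℝ) ^ m := by positivity
  constructor
  · rw [hsplit]
    calc lo ≤ (0.3678794411 : ℝ) ^ m * (T - 1 / 35840) := hlo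
      _ ≤ Real.exp (-(m : ℝ)) * Real.exp (-r) :=
        mul_le_mul hm1 hr1 hT0 (Real.exp_pos _).le
  · rw [hsplit]
    calc Real.exp (-(m : ℝ)) * Real.exp (-r)
        ≤ (0.36787944121 : ℝ) ^ m * (T + 1 / 35840) :=
          mul_le_mul hm2 hr2 (Real.exp_pos _).le (by positivity)
      _ ≤ hi := hhi

open MeasureTheory intervalIntegral

lemma contgf : ContinuousOn gf {y : ℝ | y ^ 2 < 25} := by
  apply ContinuousOn.mul
  · apply ContinuousOn.div (by fun_prop) (by fun_prop)
    intro y hy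
    exact pow_ne_zero 2 (upos hy).ne'
  · apply Real.continuous_exp.comp_continuousOn
    apply ContinuousOn.neg
    apply ContinuousOn.div (by fun_prop) (by fun_prop)
    intro y hy
    exact (upos hy).ne'

lemma conthf : ContinuousOn hf {y : ℝ | y ^ 2 < 25} := by
  apply ContinuousOn.mul
  · apply ContinuousOn.div (by fun_prop) (by fun_prop)
    intro y hy
    exact pow_ne_zero 4 (upos hy).ne'
  · apply Real.continuous_exp.comp_continuousOn
    apply ContinuousOn.neg
    apply ContinuousOn.div (by fun_prop) (by fun_prop)
    intro y hy
    exact (upos hy).ne'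

lemma Icc_sub {a b : ℝ} (ha : -3 ≤ a) (hb : b ≤ 3) :
    Set.Icc a b ⊆ {y : ℝ | y ^ 2 < 25} := by
  intro y hy
  simp only [Set.mem_setOf_eq]
  rcases hy with ⟨h1, h2⟩
  nlinarith

lemma measgf : Measurable gf := by
  unfold gf
  fun_prop

lemma meashf : Measurable hf := by
  unfold hf
  fun_prop

/-- interval integrability from a bound on `Ioc a b`. -/
lemma II {f : ℝ → ℝ} (hm : Measurable f) {a b C : ℝ} (hab : a ≤ b)
    (hb : ∀ y ∈ Set.Ioc a b, |f y| ≤ C) : IntervalIntegrable f volume a b := by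
  rw [intervalIntegrable_iff_integrableOn_Ioc_of_le hab]
  apply Measure.integrableOn_of_bounded (M := C) (measure_Ioc_lt_top).ne hm.aestronglyMeasurable
  rw [ae_restrict_iff' measurableSet_Ioc]
  exact ae_of_all _ (fun y hy => by simpa using hb y hy)

lemma cellU {a b Ea M : ℝ} (h0 : 0 ≤ a) (hab : a ≤ b) (hb3 : b ≤ 3)
    (hEa : Real.exp (-(10 / (1 - a ^ 2 / 25))) ≤ Ea)
    (hM : (b - a) * (16 * b ^ 2 * Ea ^ 2 / (1 - b ^ 2 / 25) ^ 4) ≤ M) :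
    ∫ y in a..b, (gf y) ^ 2 ≤ M := by
  have hub : (0:ℝ) < 1 - b ^ 2 / 25 := by nlinarith
  have hEa0 : 0 ≤ Ea := le_trans (Real.exp_pos _).le hEa
  have hpt : ∀ y ∈ Set.Icc a b, (gf y) ^ 2 ≤ 16 * b ^ 2 * Ea ^ 2 / (1 - b ^ 2 / 25) ^ 4 := by
    intro y ⟨hy1, hy2⟩
    have hy0 : 0 ≤ y := le_trans h0 hy1
    have huy : (0:ℝ) < 1 - y ^ 2 / 25 := by nlinarith
    have hua : (0:ℝ) < 1 - a ^ 2 / 25 := by nlinarith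
    have huyb : 1 - b ^ 2 / 25 ≤ 1 - y ^ 2 / 25 := by nlinarith
    have hE : Real.exp (-(10 / (1 - y ^ 2 / 25))) ≤ Ea := by
      refine le_trans ?_ hEa
      apply Real.exp_le_exp.mpr
      have : 10 / (1 - a ^ 2 / 25) ≤ 10 / (1 - y ^ 2 / 25) := by
        apply div_le_div_of_nonneg_left (by norm_num) huy
        nlinarith
      linarith
    have hgf : (gf y) ^ 2 = 16 * y ^ 2 * Real.exp (-(10 / (1 - y ^ 2 / 25))) ^ 2 / (1 - y ^ 2 / 25) ^ 4 := by
      rw [gf]; field_simp; ring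
    rw [hgf]
    have hE0 : (0:ℝ) ≤ Real.exp (-(10 / (1 - y ^ 2 / 25))) := (Real.exp_pos _).le
    have hy2b : y ^ 2 ≤ b ^ 2 := by nlinarith
    have hEE : Real.exp (-(10 / (1 - y ^ 2 / 25))) ^ 2 ≤ Ea ^ 2 := by nlinarith
    have hpow : (1 - b ^ 2 / 25) ^ 4 ≤ (1 - y ^ 2 / 25) ^ 4 :=
      pow_le_pow_left₀ hub.le huyb 4
    apply div_le_div₀ (by positivity) ?_ (by positivity) hpow
    nlinarith [mul_le_mul hy2b hEE (by positivity) (by positivity)]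
  have hii : IntervalIntegrable (fun y => (gf y) ^ 2) volume a b := by
    apply ContinuousOn.intervalIntegrable
    apply ((contgf.mono (Icc_sub (show (-3:ℝ) ≤ a by linarith) hb3)).pow 2).mono
    rw [Set.uIcc_of_le hab]
  calc ∫ y in a..b, (gf y) ^ 2
      ≤ ∫ _ in a..b, 16 * b ^ 2 * Ea ^ 2 / (1 - b ^ 2 / 25) ^ 4 := by
        apply intervalIntegral.integral_mono_on hab hii (intervalIntegrable_const) hpt
    _ = (b - a) * (16 * b ^ 2 * Ea ^ 2 / (1 - b ^ 2 / 25) ^ 4) := by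
        rw [intervalIntegral.integral_const, smul_eq_mul]
    _ ≤ M := hM

lemma cellL {a b m r : ℝ} (h0 : -3 ≤ a) (hab : a ≤ b) (hb3 : b ≤ 3)
    (hr : r ≤ 2 * m * (gf b - gf a) - (b - a) * m ^ 2) :
    r ≤ ∫ y in a..b, (hf y) ^ 2 := by
  have hsub : Set.uIcc a b ⊆ {y : ℝ | y ^ 2 < 25} := by
    rw [Set.uIcc_of_le hab]; exact Icc_sub h0 hb3
  have hder : ∀ y ∈ Set.uIcc a b, HasDerivAt gf (hf y) y := fun y hy => hasDerivAt_gf (hsub hy)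
  have hcont : ContinuousOn hf (Set.uIcc a b) := conthf.mono hsub
  have hiih : IntervalIntegrable hf volume a b := hcont.intervalIntegrable
  have hii2 : IntervalIntegrable (fun y => (hf y) ^ 2) volume a b :=
    (hcont.pow 2).intervalIntegrable
  have hFTC : ∫ y in a..b, hf y = gf b - gf a :=
    intervalIntegral.integral_eq_sub_of_hasDerivAt hder hiih
  have hsq : (0:ℝ) ≤ ∫ y in a..b, ((hf y) ^ 2 - 2 * m * hf y + m ^ 2) := by
    have : ∀ y ∈ Set.Icc a b, (0:ℝ) ≤ (hf y) ^ 2 - 2 * m * hf y + m ^ 2 := by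
      intro y _
      nlinarith [sq_nonneg (hf y - m)]
    apply intervalIntegral.integral_nonneg hab
    intro y hy
    exact this y hy
  have hsplit : ∫ y in a..b, ((hf y) ^ 2 - 2 * m * hf y + m ^ 2)
      = (∫ y in a..b, (hf y) ^ 2) - 2 * m * (gf b - gf a) + (b - a) * m ^ 2 := by
    rw [intervalIntegral.integral_add (hii2.sub (hiih.const_mul (2 * m))) intervalIntegrable_const,
        intervalIntegral.integral_sub hii2 (hiih.const_mul (2 * m)),
        intervalIntegral.integral_const_mul, hFTC, intervalIntegral.integral_const, smul_eq_mul]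
  linarith [hsplit ▸ hsq]

open MeasureTheory intervalIntegral

lemma gf_at5 : gf 5 = 0 := by norm_num [gf]
lemma gf_atm5 : gf (-5) = 0 := by norm_num [gf]
lemma hf_at5 : hf 5 = 0 := by norm_num [hf]
lemma hf_atm5 : hf (-5) = 0 := by norm_num [hf]

lemma gf_neg (y : ℝ) : gf (-y) = -gf y := by
  rw [gf, gf, neg_pow]
  norm_num
  ring

lemma hf_neg (y : ℝ) : hf (-y) = hf y := by
  rw [hf, hf, neg_pow]
  norm_num

lemma exp_sq {x : ℝ} : Real.exp (-(10 / x)) ^ 2 = Real.exp (-(20 / x)) := by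
  rw [sq, ← Real.exp_add]
  congr 1
  ring

lemma gf_sq_eq (y : ℝ) :
    gf y ^ 2 = 16 * y ^ 2 / (1 - y ^ 2 / 25) ^ 4 * Real.exp (-(20 / (1 - y ^ 2 / 25))) := by
  rw [gf, mul_pow, exp_sq]
  congr 1
  rw [div_pow]
  congr 1 <;> ring

lemma hf_sq_eq (y : ℝ) :
    hf y ^ 2 = (16 * y ^ 2 / 5 - 4 * (1 - y ^ 2 / 25) * (1 - y ^ 2 / 25 + 4 * y ^ 2 / 25)) ^ 2
      / (1 - y ^ 2 / 25) ^ 8 * Real.exp (-(20 / (1 - y ^ 2 / 25))) := by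
  rw [hf, mul_pow, exp_sq]
  congr 1
  rw [div_pow]
  congr 1
  ring

/-- decay bound for `gf^2` given an upper bound `u0` for `1 - y²/25`. -/
lemma gsq_decay {y u0 : ℝ} (h25 : y ^ 2 < 25) (hu0 : 1 - y ^ 2 / 25 ≤ u0) (hu01 : u0 ≤ 1) :
    gf y ^ 2 ≤ 400 * Real.exp (-(20 / u0)) / u0 ^ 4 := by
  have h1 := gf_sq_eq y
  set u : ℝ := 1 - y ^ 2 / 25 with hu
  have hup : 0 < u := upos h25
  have hu0p : 0 < u0 := lt_of_lt_of_le hup hu0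
  have h2 := expdecay hup hu0 hu01
  set E0 : ℝ := Real.exp (-(20 / u0)) with hE0
  have h3 : 16 * y ^ 2 / u ^ 4 * Real.exp (-(20 / u)) ≤ 16 * 25 / u ^ 4 * (E0 * (u / u0) ^ 8) := by
    apply mul_le_mul ?_ h2 (Real.exp_pos _).le (by positivity)
    apply div_le_div₀ (by norm_num) (by nlinarith) (by positivity) le_rfl
  have h4 : 16 * 25 / u ^ 4 * (E0 * (u / u0) ^ 8) = 400 * E0 * (u ^ 4 / u0 ^ 8) := by
    field_simp
    ring
  have h5 : 400 * E0 * (u ^ 4 / u0 ^ 8) ≤ 400 * E0 * (u0 ^ 4 / u0 ^ 8) := by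
    apply mul_le_mul_of_nonneg_left ?_ (by positivity)
    apply div_le_div₀ (by positivity) (pow_le_pow_left₀ hup.le hu0 4) (by positivity) le_rfl
  have h6 : 400 * E0 * (u0 ^ 4 / u0 ^ 8) = 400 * E0 / u0 ^ 4 := by
    field_simp
  rw [h1]
  linarith

lemma sq25 {y : ℝ} (h : y ^ 2 = 25) : y = 5 ∨ y = -5 := by
  have : (y - 5) * (y + 5) = 0 := by nlinarith
  rcases mul_eq_zero.mp this with h | h
  · left; linarith
  · right; linarith

lemma gsq_global : ∀ y ∈ Set.Icc (-5:ℝ) 5, gf y ^ 2 ≤ 400 * Real.exp (-20) := by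
  intro y ⟨h1, h2⟩
  rcases lt_or_eq_of_le (show y ^ 2 ≤ 25 by nlinarith) with h25 | h25
  · have := gsq_decay h25 (show 1 - y ^ 2 / 25 ≤ 1 by nlinarith) le_rfl
    simpa using this
  · rcases sq25 h25 with h | h <;> simp [h, gf_at5, gf_atm5] <;> positivity

lemma hsq_global : ∀ y ∈ Set.Icc (-5:ℝ) 5, hf y ^ 2 ≤ 10000 * Real.exp (-20) := by
  intro y ⟨h1, h2⟩
  rcases lt_or_eq_of_le (show y ^ 2 ≤ 25 by nlinarith) with h25 | h25
  · have h1' := hf_sq_eq y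
    have hPe : 16 * y ^ 2 / 5 - 4 * (1 - y ^ 2 / 25) * (1 - y ^ 2 / 25 + 4 * y ^ 2 / 25)
        = 72 * y ^ 2 / 25 - 4 + 12 * (y ^ 2) ^ 2 / 625 := by ring
    rw [hPe] at h1'
    set u : ℝ := 1 - y ^ 2 / 25 with hu
    have hup : 0 < u := upos h25
    have hu1 : u ≤ 1 := by rw [hu]; nlinarith
    have hs25 : y ^ 2 ≤ 25 := h25.le
    have hP : (72 * y ^ 2 / 25 - 4 + 12 * (y ^ 2) ^ 2 / 625) ^ 2 ≤ 10000 := by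
      nlinarith [sq_nonneg y, hs25, sq_nonneg (y ^ 2 - 25), sq_nonneg (y ^ 2),
        mul_nonneg (sq_nonneg y) (sub_nonneg.mpr hs25)]
    have h2' := expdecay hup hu1 le_rfl
    have h3 : (72 * y ^ 2 / 25 - 4 + 12 * (y ^ 2) ^ 2 / 625) ^ 2 / u ^ 8 * Real.exp (-(20 / u))
        ≤ 10000 / u ^ 8 * (Real.exp (-(20 / 1)) * (u / 1) ^ 8) := by
      apply mul_le_mul ?_ h2' (Real.exp_pos _).le (by positivity)
      apply div_le_div₀ (by norm_num) hP (by positivity) le_rfl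
    have h4 : 10000 / u ^ 8 * (Real.exp (-(20 / 1)) * (u / 1) ^ 8) = 10000 * Real.exp (-20) := by
      have : ((20:ℝ) / 1) = 20 := by norm_num
      rw [this]
      field_simp
    rw [h1']
    linarith
  · rcases sq25 h25 with h | h <;> simp [h, hf_at5, hf_atm5] <;> positivity

lemma tail_ptw : ∀ y ∈ Set.Icc (3:ℝ) 5, gf y ^ 2 ≤ 2385 * Real.exp (-(125/4)) := by
  intro y ⟨h1, h2⟩
  rcases lt_or_eq_of_le (show y ^ 2 ≤ 25 by nlinarith) with h25 | h25
  · have hu0 : 1 - y ^ 2 / 25 ≤ 16/25 := by nlinarith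
    have := gsq_decay h25 hu0 (by norm_num)
    have heq : (400:ℝ) * Real.exp (-(20 / (16/25))) / (16/25) ^ 4 = 400 * (25/16) ^ 4 * Real.exp (-(125/4)) := by
      norm_num
      ring
    rw [heq] at this
    nlinarith [Real.exp_pos (-(125/4:ℝ))]
  · rcases sq25 h25 with h | h
    · simp [h, gf_at5]; positivity
    · exfalso; linarith

open MeasureTheory intervalIntegral

noncomputable def Fe (y : ℝ) : ℝ :=
  Real.sqrt (1 + gf y ^ 2) * (1 - hf y ^ 2 / (2 * (1 + gf y ^ 2) ^ 3))

lemma Sconv :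
    (∫ y in (-5:ℝ)..5,
        Real.sqrt (1 + (deriv bump y) ^ 2) *
          (1 - (deriv (deriv bump) y) ^ 2 /
            (2 * (1 + (deriv bump y) ^ 2) ^ 3)))
      = ∫ y in (-5:ℝ)..5, Fe y := by
  apply intervalIntegral.integral_congr_ae
  have h5 : ∀ᵐ (x:ℝ), x ∉ ({5} : Set ℝ) := compl_mem_ae_iff.mpr (measure_singleton 5)
  filter_upwards [h5] with x hx hmem
  rw [Set.uIoc_of_le (by norm_num : (-5:ℝ) ≤ 5)] at hmem
  have hx5 : x ≠ 5 := by simpa using hx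
  have hx2 : x ^ 2 < 25 := by
    rcases hmem with ⟨ha, hb⟩
    have : x < 5 := lt_of_le_of_ne hb hx5
    nlinarith
  rw [Fe, deriv_bump_eq hx2, deriv2_bump_eq hx2]

lemma numeric_G : (400:ℝ) * Real.exp (-20) ≤ 0.000001 := by
  have := (exp_neg_nat 20).2
  have h2 : ((20:ℕ):ℝ) = (20:ℝ) := by norm_num
  nlinarith [this, pow_nonneg (show (0:ℝ) ≤ 0.36787944121 by norm_num) 20,
    show ((0.36787944121:ℝ))^20 ≤ 0.0000000021 by norm_num]

lemma numeric_H : (10000:ℝ) * Real.exp (-20) ≤ 0.0001 := by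
  nlinarith [(exp_neg_nat 20).2, show ((0.36787944121:ℝ))^20 ≤ 0.0000000021 by norm_num]

lemma ptFeB : ∀ y ∈ Set.Icc (-5:ℝ) 5,
    Fe y ≤ 1 + gf y ^ 2 / 2 - hf y ^ 2 / (2 * 1.00001) := by
  intro y hy
  have hG : gf y ^ 2 ≤ 0.000001 := le_trans (gsq_global y hy) numeric_G
  have hG0 : (0:ℝ) ≤ gf y ^ 2 := sq_nonneg _
  have hH0 : (0:ℝ) ≤ hf y ^ 2 := sq_nonneg _
  set G := gf y ^ 2
  set H := hf y ^ 2
  set s := Real.sqrt (1 + G) with hs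
  have hs2 : s ^ 2 = 1 + G := Real.sq_sqrt (by positivity)
  have hs1 : 1 ≤ s := by
    have h := Real.sqrt_le_sqrt (show (1:ℝ) ≤ 1 + G by linarith)
    rwa [Real.sqrt_one] at h
  have hsle : s ≤ 1 + G / 2 := by
    rw [hs]
    calc Real.sqrt (1 + G) ≤ Real.sqrt ((1 + G / 2) ^ 2) := Real.sqrt_le_sqrt (by nlinarith)
      _ = 1 + G / 2 := Real.sqrt_sq (by linarith)
  have hs5 : s ^ 5 ≤ 1.00001 := by
    have h6 : s ^ 6 = (1 + G) ^ 3 := by rw [← hs2]; ring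
    have h56 : s ^ 5 ≤ s ^ 6 := pow_le_pow_right₀ hs1 (by norm_num)
    have hGc : (1 + G) ^ 3 ≤ 1.00001 := by
      nlinarith [hG, hG0, mul_nonneg hG0 hG0,
        mul_le_mul_of_nonneg_left hG hG0,
        mul_le_mul_of_nonneg_left (mul_le_mul_of_nonneg_left hG hG0) hG0]
    linarith [h6 ▸ h56]
  have hFe : Fe y = s - H / (2 * s ^ 5) := by
    rw [Fe]
    have h13 : (1 + G) ^ 3 = s ^ 6 := by rw [← hs2]; ring
    rw [h13]
    have hsne : s ≠ 0 := by linarith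
    field_simp
    ring
  rw [hFe]
  have hdiv : H / (2 * 1.00001) ≤ H / (2 * s ^ 5) := by
    apply div_le_div_of_nonneg_left hH0 (by positivity) (by linarith)
  linarith

lemma measFe : Measurable Fe := by
  apply Measurable.mul
  · exact (measurable_const.add ((measgf.pow_const 2))).sqrt
  · apply Measurable.sub measurable_const
    apply Measurable.div (meashf.pow_const 2)
    exact (measurable_const.mul ((measurable_const.add (measgf.pow_const 2)).pow_const 3))

lemma IIg2 {a b : ℝ} (ha : -5 ≤ a) (hab : a ≤ b) (hb : b ≤ 5) :
    IntervalIntegrable (fun y => gf y ^ 2) volume a b := by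
  apply II (measgf.pow_const 2) hab (C := 400)
  intro y hy
  have hmem : y ∈ Set.Icc (-5:ℝ) 5 := ⟨by linarith [hy.1], by linarith [hy.2]⟩
  have := gsq_global y hmem
  rw [abs_of_nonneg (sq_nonneg _)]
  nlinarith [Real.exp_pos (-20:ℝ), Real.exp_le_one_iff.mpr (show (-20:ℝ) ≤ 0 by norm_num)]

lemma IIh2 {a b : ℝ} (ha : -5 ≤ a) (hab : a ≤ b) (hb : b ≤ 5) :
    IntervalIntegrable (fun y => hf y ^ 2) volume a b := by
  apply II (meashf.pow_const 2) hab (C := 10000)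
  intro y hy
  have hmem : y ∈ Set.Icc (-5:ℝ) 5 := ⟨by linarith [hy.1], by linarith [hy.2]⟩
  have := hsq_global y hmem
  rw [abs_of_nonneg (sq_nonneg _)]
  nlinarith [Real.exp_pos (-20:ℝ), Real.exp_le_one_iff.mpr (show (-20:ℝ) ≤ 0 by norm_num)]

lemma IIFe : IntervalIntegrable Fe volume (-5) 5 := by
  apply II measFe (by norm_num) (C := 2)
  intro y hy
  have hmem : y ∈ Set.Icc (-5:ℝ) 5 := ⟨by linarith [hy.1], by linarith [hy.2]⟩
  have hG : gf y ^ 2 ≤ 0.000001 := le_trans (gsq_global y hmem) numeric_G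
  have hH : hf y ^ 2 ≤ 0.0001 := le_trans (hsq_global y hmem) numeric_H
  have hG0 : (0:ℝ) ≤ gf y ^ 2 := sq_nonneg _
  have hH0 : (0:ℝ) ≤ hf y ^ 2 := sq_nonneg _
  rw [Fe, abs_mul]
  have h1 : |Real.sqrt (1 + gf y ^ 2)| ≤ 1.1 := by
    rw [abs_of_nonneg (Real.sqrt_nonneg _)]
    calc Real.sqrt (1 + gf y ^ 2) ≤ Real.sqrt (1.1 ^ 2) := Real.sqrt_le_sqrt (by nlinarith)
      _ = 1.1 := Real.sqrt_sq (by norm_num)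
  have hden : (1:ℝ) ≤ (1 + gf y ^ 2) ^ 3 :=
    one_le_pow₀ (by nlinarith)
  have h2 : |1 - hf y ^ 2 / (2 * (1 + gf y ^ 2) ^ 3)| ≤ 1 := by
    rw [abs_le]
    constructor
    · have : hf y ^ 2 / (2 * (1 + gf y ^ 2) ^ 3) ≤ hf y ^ 2 / 2 := by
        apply div_le_div_of_nonneg_left hH0 (by norm_num) (by nlinarith)
      nlinarith
    · have : (0:ℝ) ≤ hf y ^ 2 / (2 * (1 + gf y ^ 2) ^ 3) := by positivity
      linarith
  calc |Real.sqrt (1 + gf y ^ 2)| * |1 - hf y ^ 2 / (2 * (1 + gf y ^ 2) ^ 3)|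
      ≤ 1.1 * 1 := mul_le_mul h1 h2 (abs_nonneg _) (by norm_num)
    _ ≤ 2 := by norm_num

open MeasureTheory intervalIntegral

lemma E0 : (4539866293/100000000000000 : ℝ) ≤ Real.exp (-(10 / (1 - (0 : ℝ) ^ 2 / 25))) ∧ Real.exp (-(10 / (1 - (0 : ℝ) ^ 2 / 25))) ≤ (908023931/20000000000000 : ℝ) :=
  epb 10 _ (0 : ℝ) (4539866293/100000000000000 : ℝ) (908023931/20000000000000 : ℝ) (by norm_num) (by norm_num) (by norm_num) (by norm_num) (by norm_num) (by norm_num)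
lemma gv0 : gf (0 : ℝ) = (0 : ℝ) * Real.exp (-(10 / (1 - (0 : ℝ) ^ 2 / 25))) := by
  rw [gf]; norm_num
lemma E1 : (2264830249/50000000000000 : ℝ) ≤ Real.exp (-(10 / (1 - (3/40 : ℝ) ^ 2 / 25))) ∧ Real.exp (-(10 / (1 - (3/40 : ℝ) ^ 2 / 25))) ≤ (4529913861/100000000000000 : ℝ) :=
  epb 10 _ (90/39991 : ℝ) (2264830249/50000000000000 : ℝ) (4529913861/100000000000000 : ℝ) (by norm_num) (by norm_num) (by norm_num) (by norm_num) (by norm_num) (by norm_num)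
lemma gv1 : gf (3/40 : ℝ) = (-480000000/1599280081 : ℝ) * Real.exp (-(10 / (1 - (3/40 : ℝ) ^ 2 / 25))) := by
  rw [gf]; norm_num
lemma E2 : (4499153199/100000000000000 : ℝ) ≤ Real.exp (-(10 / (1 - (3/20 : ℝ) ^ 2 / 25))) ∧ Real.exp (-(10 / (1 - (3/20 : ℝ) ^ 2 / 25))) ≤ (4499406561/100000000000000 : ℝ) :=
  epb 10 _ (90/9991 : ℝ) (4499153199/100000000000000 : ℝ) (4499406561/100000000000000 : ℝ) (by norm_num) (by norm_num) (by norm_num) (by norm_num) (by norm_num) (by norm_num)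
lemma gv2 : gf (3/20 : ℝ) = (-60000000/99820081 : ℝ) * Real.exp (-(10 / (1 - (3/20 : ℝ) ^ 2 / 25))) := by
  rw [gf]; norm_num
lemma E3 : (2224336611/50000000000000 : ℝ) ≤ Real.exp (-(10 / (1 - (9/40 : ℝ) ^ 2 / 25))) ∧ Real.exp (-(10 / (1 - (9/40 : ℝ) ^ 2 / 25))) ≤ (556115823/12500000000000 : ℝ) :=
  epb 10 _ (810/39919 : ℝ) (2224336611/50000000000000 : ℝ) (556115823/12500000000000 : ℝ) (by norm_num) (by norm_num) (by norm_num) (by norm_num) (by norm_num) (by norm_num)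
lemma gv3 : gf (9/40 : ℝ) = (-1440000000/1593526561 : ℝ) * Real.exp (-(10 / (1 - (9/40 : ℝ) ^ 2 / 25))) := by
  rw [gf]; norm_num
lemma E4 : (2189381941/50000000000000 : ℝ) ≤ Real.exp (-(10 / (1 - (3/10 : ℝ) ^ 2 / 25))) ∧ Real.exp (-(10 / (1 - (3/10 : ℝ) ^ 2 / 25))) ≤ (1094754311/25000000000000 : ℝ) :=
  epb 10 _ (90/2491 : ℝ) (2189381941/50000000000000 : ℝ) (1094754311/25000000000000 : ℝ) (by norm_num) (by norm_num) (by norm_num) (by norm_num) (by norm_num) (by norm_num)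
lemma gv4 : gf (3/10 : ℝ) = (-7500000/6205081 : ℝ) * Real.exp (-(10 / (1 - (3/10 : ℝ) ^ 2 / 25))) := by
  rw [gf]; norm_num
lemma E5 : (4290175927/100000000000000 : ℝ) ≤ Real.exp (-(10 / (1 - (3/8 : ℝ) ^ 2 / 25))) ∧ Real.exp (-(10 / (1 - (3/8 : ℝ) ^ 2 / 25))) ≤ (4290429289/100000000000000 : ℝ) :=
  epb 10 _ (90/1591 : ℝ) (4290175927/100000000000000 : ℝ) (4290429289/100000000000000 : ℝ) (by norm_num) (by norm_num) (by norm_num) (by norm_num) (by norm_num) (by norm_num)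
lemma gv5 : gf (3/8 : ℝ) = (-3840000/2531281 : ℝ) * Real.exp (-(10 / (1 - (3/8 : ℝ) ^ 2 / 25))) := by
  rw [gf]; norm_num
lemma E6 : (836771551/20000000000000 : ℝ) ≤ Real.exp (-(10 / (1 - (9/20 : ℝ) ^ 2 / 25))) ∧ Real.exp (-(10 / (1 - (9/20 : ℝ) ^ 2 / 25))) ≤ (1046027779/25000000000000 : ℝ) :=
  epb 10 _ (810/9919 : ℝ) (836771551/20000000000000 : ℝ) (1046027779/25000000000000 : ℝ) (by norm_num) (by norm_num) (by norm_num) (by norm_num) (by norm_num) (by norm_num)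
lemma gv6 : gf (9/20 : ℝ) = (-180000000/98386561 : ℝ) * Real.exp (-(10 / (1 - (9/20 : ℝ) ^ 2 / 25))) := by
  rw [gf]; norm_num
lemma E7 : (1015235751/25000000000000 : ℝ) ≤ Real.exp (-(10 / (1 - (21/40 : ℝ) ^ 2 / 25))) ∧ Real.exp (-(10 / (1 - (21/40 : ℝ) ^ 2 / 25))) ≤ (812239273/20000000000000 : ℝ) :=
  epb 10 _ (4410/39559 : ℝ) (1015235751/25000000000000 : ℝ) (812239273/20000000000000 : ℝ) (by norm_num) (by norm_num) (by norm_num) (by norm_num) (by norm_num) (by norm_num)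
lemma gv7 : gf (21/40 : ℝ) = (-3360000000/1564914481 : ℝ) * Real.exp (-(10 / (1 - (21/40 : ℝ) ^ 2 / 25))) := by
  rw [gf]; norm_num
lemma E8 : (3922735629/100000000000000 : ℝ) ≤ Real.exp (-(10 / (1 - (3/5 : ℝ) ^ 2 / 25))) ∧ Real.exp (-(10 / (1 - (3/5 : ℝ) ^ 2 / 25))) ≤ (392298899/10000000000000 : ℝ) :=
  epb 10 _ (45/308 : ℝ) (3922735629/100000000000000 : ℝ) (392298899/10000000000000 : ℝ) (by norm_num) (by norm_num) (by norm_num) (by norm_num) (by norm_num) (by norm_num)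
lemma gv8 : gf (3/5 : ℝ) = (-234375/94864 : ℝ) * Real.exp (-(10 / (1 - (3/5 : ℝ) ^ 2 / 25))) := by
  rw [gf]; norm_num
lemma E9 : (30165541/800000000000 : ℝ) ≤ Real.exp (-(10 / (1 - (27/40 : ℝ) ^ 2 / 25))) ∧ Real.exp (-(10 / (1 - (27/40 : ℝ) ^ 2 / 25))) ≤ (754189197/20000000000000 : ℝ) :=
  epb 10 _ (7290/39271 : ℝ) (30165541/800000000000 : ℝ) (754189197/20000000000000 : ℝ) (by norm_num) (by norm_num) (by norm_num) (by norm_num) (by norm_num) (by norm_num)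
lemma gv9 : gf (27/40 : ℝ) = (-4320000000/1542211441 : ℝ) * Real.exp (-(10 / (1 - (27/40 : ℝ) ^ 2 / 25))) := by
  rw [gf]; norm_num
lemma E10 : (901601141/25000000000000 : ℝ) ≤ Real.exp (-(10 / (1 - (3/4 : ℝ) ^ 2 / 25))) ∧ Real.exp (-(10 / (1 - (3/4 : ℝ) ^ 2 / 25))) ≤ (901664481/25000000000000 : ℝ) :=
  epb 10 _ (90/391 : ℝ) (901601141/25000000000000 : ℝ) (901664481/25000000000000 : ℝ) (by norm_num) (by norm_num) (by norm_num) (by norm_num) (by norm_num) (by norm_num)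
lemma gv10 : gf (3/4 : ℝ) = (-480000/152881 : ℝ) * Real.exp (-(10 / (1 - (3/4 : ℝ) ^ 2 / 25))) := by
  rw [gf]; norm_num
lemma E11 : (3431574187/100000000000000 : ℝ) ≤ Real.exp (-(10 / (1 - (33/40 : ℝ) ^ 2 / 25))) ∧ Real.exp (-(10 / (1 - (33/40 : ℝ) ^ 2 / 25))) ≤ (1715913773/50000000000000 : ℝ) :=
  epb 10 _ (10890/38911 : ℝ) (3431574187/100000000000000 : ℝ) (1715913773/50000000000000 : ℝ) (by norm_num) (by norm_num) (by norm_num) (by norm_num) (by norm_num) (by norm_num)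
lemma gv11 : gf (33/40 : ℝ) = (-5280000000/1514065921 : ℝ) * Real.exp (-(10 / (1 - (33/40 : ℝ) ^ 2 / 25))) := by
  rw [gf]; norm_num
lemma E12 : (1623996629/50000000000000 : ℝ) ≤ Real.exp (-(10 / (1 - (9/10 : ℝ) ^ 2 / 25))) ∧ Real.exp (-(10 / (1 - (9/10 : ℝ) ^ 2 / 25))) ≤ (406030827/12500000000000 : ℝ) :=
  epb 10 _ (810/2419 : ℝ) (1623996629/50000000000000 : ℝ) (406030827/12500000000000 : ℝ) (by norm_num) (by norm_num) (by norm_num) (by norm_num) (by norm_num) (by norm_num)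
lemma gv12 : gf (9/10 : ℝ) = (-22500000/5851561 : ℝ) * Real.exp (-(10 / (1 - (9/10 : ℝ) ^ 2 / 25))) := by
  rw [gf]; norm_num
lemma E13 : (1528758991/50000000000000 : ℝ) ≤ Real.exp (-(10 / (1 - (39/40 : ℝ) ^ 2 / 25))) ∧ Real.exp (-(10 / (1 - (39/40 : ℝ) ^ 2 / 25))) ≤ (152888567/5000000000000 : ℝ) :=
  epb 10 _ (15210/38479 : ℝ) (1528758991/50000000000000 : ℝ) (152888567/5000000000000 : ℝ) (by norm_num) (by norm_num) (by norm_num) (by norm_num) (by norm_num) (by norm_num)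
lemma gv13 : gf (39/40 : ℝ) = (-6240000000/1480633441 : ℝ) * Real.exp (-(10 / (1 - (39/40 : ℝ) ^ 2 / 25))) := by
  rw [gf]; norm_num
lemma E14 : (572408653/20000000000000 : ℝ) ≤ Real.exp (-(10 / (1 - (21/20 : ℝ) ^ 2 / 25))) ∧ Real.exp (-(10 / (1 - (21/20 : ℝ) ^ 2 / 25))) ≤ (1431148311/50000000000000 : ℝ) :=
  epb 10 _ (4410/9559 : ℝ) (572408653/20000000000000 : ℝ) (1431148311/50000000000000 : ℝ) (by norm_num) (by norm_num) (by norm_num) (by norm_num) (by norm_num) (by norm_num)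
lemma gv14 : gf (21/20 : ℝ) = (-420000000/91374481 : ℝ) * Real.exp (-(10 / (1 - (21/20 : ℝ) ^ 2 / 25))) := by
  rw [gf]; norm_num
lemma E15 : (532695227/20000000000000 : ℝ) ≤ Real.exp (-(10 / (1 - (9/8 : ℝ) ^ 2 / 25))) ∧ Real.exp (-(10 / (1 - (9/8 : ℝ) ^ 2 / 25))) ≤ (665932373/25000000000000 : ℝ) :=
  epb 10 _ (810/1519 : ℝ) (532695227/20000000000000 : ℝ) (665932373/25000000000000 : ℝ) (by norm_num) (by norm_num) (by norm_num) (by norm_num) (by norm_num) (by norm_num)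
lemma gv15 : gf (9/8 : ℝ) = (-11520000/2307361 : ℝ) * Real.exp (-(10 / (1 - (9/8 : ℝ) ^ 2 / 25))) := by
  rw [gf]; norm_num
lemma E16 : (307963577/12500000000000 : ℝ) ≤ Real.exp (-(10 / (1 - (6/5 : ℝ) ^ 2 / 25))) ∧ Real.exp (-(10 / (1 - (6/5 : ℝ) ^ 2 / 25))) ≤ (615990493/25000000000000 : ℝ) :=
  epb 10 _ (360/589 : ℝ) (307963577/12500000000000 : ℝ) (615990493/25000000000000 : ℝ) (by norm_num) (by norm_num) (by norm_num) (by norm_num) (by norm_num) (by norm_num)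
lemma gv16 : gf (6/5 : ℝ) = (-1875000/346921 : ℝ) * Real.exp (-(10 / (1 - (6/5 : ℝ) ^ 2 / 25))) := by
  rw [gf]; norm_num
lemma E17 : (452918061/20000000000000 : ℝ) ≤ Real.exp (-(10 / (1 - (51/40 : ℝ) ^ 2 / 25))) ∧ Real.exp (-(10 / (1 - (51/40 : ℝ) ^ 2 / 25))) ≤ (2264843661/100000000000000 : ℝ) :=
  epb 10 _ (26010/37399 : ℝ) (452918061/20000000000000 : ℝ) (2264843661/100000000000000 : ℝ) (by norm_num) (by norm_num) (by norm_num) (by norm_num) (by norm_num) (by norm_num)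
lemma gv17 : gf (51/40 : ℝ) = (-8160000000/1398685201 : ℝ) * Real.exp (-(10 / (1 - (51/40 : ℝ) ^ 2 / 25))) := by
  rw [gf]; norm_num
lemma E18 : (258487591/12500000000000 : ℝ) ≤ Real.exp (-(10 / (1 - (27/20 : ℝ) ^ 2 / 25))) ∧ Real.exp (-(10 / (1 - (27/20 : ℝ) ^ 2 / 25))) ≤ (2068154083/100000000000000 : ℝ) :=
  epb 10 _ (7290/9271 : ℝ) (258487591/12500000000000 : ℝ) (2068154083/100000000000000 : ℝ) (by norm_num) (by norm_num) (by norm_num) (by norm_num) (by norm_num) (by norm_num)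
lemma gv18 : gf (27/20 : ℝ) = (-540000000/85951441 : ℝ) * Real.exp (-(10 / (1 - (27/20 : ℝ) ^ 2 / 25))) := by
  rw [gf]; norm_num
lemma E19 : (14650947/781250000000 : ℝ) ≤ Real.exp (-(10 / (1 - (57/40 : ℝ) ^ 2 / 25))) ∧ Real.exp (-(10 / (1 - (57/40 : ℝ) ^ 2 / 25))) ≤ (187557457/10000000000000 : ℝ) :=
  epb 10 _ (32490/36751 : ℝ) (14650947/781250000000 : ℝ) (187557457/10000000000000 : ℝ) (by norm_num) (by norm_num) (by norm_num) (by norm_num) (by norm_num) (by norm_num)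
lemma gv19 : gf (57/40 : ℝ) = (-9120000000/1350636001 : ℝ) * Real.exp (-(10 / (1 - (57/40 : ℝ) ^ 2 / 25))) := by
  rw [gf]; norm_num
lemma E20 : (1688405359/100000000000000 : ℝ) ≤ Real.exp (-(10 / (1 - (3/2 : ℝ) ^ 2 / 25))) ∧ Real.exp (-(10 / (1 - (3/2 : ℝ) ^ 2 / 25))) ≤ (1688658713/100000000000000 : ℝ) :=
  epb 10 _ (90/91 : ℝ) (1688405359/100000000000000 : ℝ) (1688658713/100000000000000 : ℝ) (by norm_num) (by norm_num) (by norm_num) (by norm_num) (by norm_num) (by norm_num)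
lemma gv20 : gf (3/2 : ℝ) = (-60000/8281 : ℝ) * Real.exp (-(10 / (1 - (3/2 : ℝ) ^ 2 / 25))) := by
  rw [gf]; norm_num
lemma E21 : (754421503/50000000000000 : ℝ) ≤ Real.exp (-(10 / (1 - (63/40 : ℝ) ^ 2 / 25))) ∧ Real.exp (-(10 / (1 - (63/40 : ℝ) ^ 2 / 25))) ≤ (754468107/50000000000000 : ℝ) :=
  epb 11 _ (3659/36031 : ℝ) (754421503/50000000000000 : ℝ) (754468107/50000000000000 : ℝ) (by norm_num) (by norm_num) (by norm_num) (by norm_num) (by norm_num) (by norm_num)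
lemma gv21 : gf (63/40 : ℝ) = (-10080000000/1298232961 : ℝ) * Real.exp (-(10 / (1 - (63/40 : ℝ) ^ 2 / 25))) := by
  rw [gf]; norm_num
lemma E22 : (334376123/25000000000000 : ℝ) ≤ Real.exp (-(10 / (1 - (33/20 : ℝ) ^ 2 / 25))) ∧ Real.exp (-(10 / (1 - (33/20 : ℝ) ^ 2 / 25))) ≤ (668798849/50000000000000 : ℝ) :=
  epb 11 _ (1979/8911 : ℝ) (334376123/25000000000000 : ℝ) (668798849/50000000000000 : ℝ) (by norm_num) (by norm_num) (by norm_num) (by norm_num) (by norm_num) (by norm_num)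
lemma gv22 : gf (33/20 : ℝ) = (-660000000/79405921 : ℝ) * Real.exp (-(10 / (1 - (33/20 : ℝ) ^ 2 / 25))) := by
  rw [gf]; norm_num
lemma E23 : (293913889/25000000000000 : ℝ) ≤ Real.exp (-(10 / (1 - (69/40 : ℝ) ^ 2 / 25))) ∧ Real.exp (-(10 / (1 - (69/40 : ℝ) ^ 2 / 25))) ≤ (587874381/50000000000000 : ℝ) :=
  epb 11 _ (12371/35239 : ℝ) (293913889/25000000000000 : ℝ) (587874381/50000000000000 : ℝ) (by norm_num) (by norm_num) (by norm_num) (by norm_num) (by norm_num) (by norm_num)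
lemma gv23 : gf (69/40 : ℝ) = (-11040000000/1241787121 : ℝ) * Real.exp (-(10 / (1 - (69/40 : ℝ) ^ 2 / 25))) := by
  rw [gf]; norm_num
lemma E24 : (128024671/12500000000000 : ℝ) ≤ Real.exp (-(10 / (1 - (9/5 : ℝ) ^ 2 / 25))) ∧ Real.exp (-(10 / (1 - (9/5 : ℝ) ^ 2 / 25))) ≤ (512145287/50000000000000 : ℝ) :=
  epb 11 _ (133/272 : ℝ) (128024671/12500000000000 : ℝ) (512145287/50000000000000 : ℝ) (by norm_num) (by norm_num) (by norm_num) (by norm_num) (by norm_num) (by norm_num)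
lemma gv24 : gf (9/5 : ℝ) = (-703125/73984 : ℝ) * Real.exp (-(10 / (1 - (9/5 : ℝ) ^ 2 / 25))) := by
  rw [gf]; norm_num
lemma E25 : (4419143229/500000000000000 : ℝ) ≤ Real.exp (-(10 / (1 - (15/8 : ℝ) ^ 2 / 25))) ∧ Real.exp (-(10 / (1 - (15/8 : ℝ) ^ 2 / 25))) ≤ (4419609251/500000000000000 : ℝ) :=
  epb 11 _ (7/11 : ℝ) (4419143229/500000000000000 : ℝ) (4419609251/500000000000000 : ℝ) (by norm_num) (by norm_num) (by norm_num) (by norm_num) (by norm_num) (by norm_num)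
lemma gv25 : gf (15/8 : ℝ) = (-6144/605 : ℝ) * Real.exp (-(10 / (1 - (15/8 : ℝ) ^ 2 / 25))) := by
  rw [gf]; norm_num
lemma E26 : (3775187681/500000000000000 : ℝ) ≤ Real.exp (-(10 / (1 - (39/20 : ℝ) ^ 2 / 25))) ∧ Real.exp (-(10 / (1 - (39/20 : ℝ) ^ 2 / 25))) ≤ (3775653701/500000000000000 : ℝ) :=
  epb 11 _ (6731/8479 : ℝ) (3775187681/500000000000000 : ℝ) (3775653701/500000000000000 : ℝ) (by norm_num) (by norm_num) (by norm_num) (by norm_num) (by norm_num) (by norm_num)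
lemma gv26 : gf (39/20 : ℝ) = (-780000000/71893441 : ℝ) * Real.exp (-(10 / (1 - (39/20 : ℝ) ^ 2 / 25))) := by
  rw [gf]; norm_num
lemma E27 : (1595233243/250000000000000 : ℝ) ≤ Real.exp (-(10 / (1 - (81/40 : ℝ) ^ 2 / 25))) ∧ Real.exp (-(10 / (1 - (81/40 : ℝ) ^ 2 / 25))) ≤ (398866563/62500000000000 : ℝ) :=
  epb 11 _ (32171/33439 : ℝ) (1595233243/250000000000000 : ℝ) (398866563/62500000000000 : ℝ) (by norm_num) (by norm_num) (by norm_num) (by norm_num) (by norm_num) (by norm_num)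
lemma gv27 : gf (81/40 : ℝ) = (-12960000000/1118166721 : ℝ) * Real.exp (-(10 / (1 - (81/40 : ℝ) ^ 2 / 25))) := by
  rw [gf]; norm_num
lemma E28 : (1066331309/200000000000000 : ℝ) ≤ Real.exp (-(10 / (1 - (21/10 : ℝ) ^ 2 / 25))) ∧ Real.exp (-(10 / (1 - (21/10 : ℝ) ^ 2 / 25))) ≤ (2665999717/500000000000000 : ℝ) :=
  epb 12 _ (292/2059 : ℝ) (1066331309/200000000000000 : ℝ) (2665999717/500000000000000 : ℝ) (by norm_num) (by norm_num) (by norm_num) (by norm_num) (by norm_num) (by norm_num)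
lemma gv28 : gf (21/10 : ℝ) = (-52500000/4239481 : ℝ) * Real.exp (-(10 / (1 - (21/10 : ℝ) ^ 2 / 25))) := by
  rw [gf]; norm_num
lemma E29 : (2199975729/500000000000000 : ℝ) ≤ Real.exp (-(10 / (1 - (87/40 : ℝ) ^ 2 / 25))) ∧ Real.exp (-(10 / (1 - (87/40 : ℝ) ^ 2 / 25))) ≤ (550036793/125000000000000 : ℝ) :=
  epb 12 _ (10828/32431 : ℝ) (2199975729/500000000000000 : ℝ) (550036793/125000000000000 : ℝ) (by norm_num) (by norm_num) (by norm_num) (by norm_num) (by norm_num) (by norm_num)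
lemma gv29 : gf (87/40 : ℝ) = (-13920000000/1051769761 : ℝ) * Real.exp (-(10 / (1 - (87/40 : ℝ) ^ 2 / 25))) := by
  rw [gf]; norm_num
lemma E30 : (358327603/100000000000000 : ℝ) ≤ Real.exp (-(10 / (1 - (9/4 : ℝ) ^ 2 / 25))) ∧ Real.exp (-(10 / (1 - (9/4 : ℝ) ^ 2 / 25))) ≤ (3583618913/1000000000000000 : ℝ) :=
  epb 12 _ (172/319 : ℝ) (358327603/100000000000000 : ℝ) (3583618913/1000000000000000 : ℝ) (by norm_num) (by norm_num) (by norm_num) (by norm_num) (by norm_num) (by norm_num)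
lemma gv30 : gf (9/4 : ℝ) = (-1440000/101761 : ℝ) * Real.exp (-(10 / (1 - (9/4 : ℝ) ^ 2 / 25))) := by
  rw [gf]; norm_num
lemma E31 : (2876809669/1000000000000000 : ℝ) ≤ Real.exp (-(10 / (1 - (93/40 : ℝ) ^ 2 / 25))) ∧ Real.exp (-(10 / (1 - (93/40 : ℝ) ^ 2 / 25))) ≤ (2877152549/1000000000000000 : ℝ) :=
  epb 12 _ (23788/31351 : ℝ) (2876809669/1000000000000000 : ℝ) (2877152549/1000000000000000 : ℝ) (by norm_num) (by norm_num) (by norm_num) (by norm_num) (by norm_num) (by norm_num)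
lemma gv31 : gf (93/40 : ℝ) = (-14880000000/982885201 : ℝ) * Real.exp (-(10 / (1 - (93/40 : ℝ) ^ 2 / 25))) := by
  rw [gf]; norm_num
lemma E32 : (2274169311/1000000000000000 : ℝ) ≤ Real.exp (-(10 / (1 - (12/5 : ℝ) ^ 2 / 25))) ∧ Real.exp (-(10 / (1 - (12/5 : ℝ) ^ 2 / 25))) ≤ (2274512189/1000000000000000 : ℝ) :=
  epb 12 _ (478/481 : ℝ) (2274169311/1000000000000000 : ℝ) (2274512189/1000000000000000 : ℝ) (by norm_num) (by norm_num) (by norm_num) (by norm_num) (by norm_num) (by norm_num)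
lemma gv32 : gf (12/5 : ℝ) = (-3750000/231361 : ℝ) * Real.exp (-(10 / (1 - (12/5 : ℝ) ^ 2 / 25))) := by
  rw [gf]; norm_num
lemma E33 : (1768272683/1000000000000000 : ℝ) ≤ Real.exp (-(10 / (1 - (99/40 : ℝ) ^ 2 / 25))) ∧ Real.exp (-(10 / (1 - (99/40 : ℝ) ^ 2 / 25))) ≤ (884199413/500000000000000 : ℝ) :=
  epb 13 _ (7413/30199 : ℝ) (1768272683/1000000000000000 : ℝ) (884199413/500000000000000 : ℝ) (by norm_num) (by norm_num) (by norm_num) (by norm_num) (by norm_num) (by norm_num)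
lemma gv33 : gf (99/40 : ℝ) = (-15840000000/911979601 : ℝ) * Real.exp (-(10 / (1 - (99/40 : ℝ) ^ 2 / 25))) := by
  rw [gf]; norm_num
lemma E34 : (675012921/500000000000000 : ℝ) ≤ Real.exp (-(10 / (1 - (51/20 : ℝ) ^ 2 / 25))) ∧ Real.exp (-(10 / (1 - (51/20 : ℝ) ^ 2 / 25))) ≤ (1350151983/1000000000000000 : ℝ) :=
  epb 13 _ (3813/7399 : ℝ) (675012921/500000000000000 : ℝ) (1350151983/1000000000000000 : ℝ) (by norm_num) (by norm_num) (by norm_num) (by norm_num) (by norm_num) (by norm_num)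
lemma gv34 : gf (51/20 : ℝ) = (-1020000000/54745201 : ℝ) * Real.exp (-(10 / (1 - (51/20 : ℝ) ^ 2 / 25))) := by
  rw [gf]; norm_num
lemma E35 : (101048949/100000000000000 : ℝ) ≤ Real.exp (-(10 / (1 - (21/8 : ℝ) ^ 2 / 25))) ∧ Real.exp (-(10 / (1 - (21/8 : ℝ) ^ 2 / 25))) ≤ (1010615629/1000000000000000 : ℝ) :=
  epb 13 _ (933/1159 : ℝ) (101048949/100000000000000 : ℝ) (1010615629/1000000000000000 : ℝ) (by norm_num) (by norm_num) (by norm_num) (by norm_num) (by norm_num) (by norm_num)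
lemma gv35 : gf (21/8 : ℝ) = (-26880000/1343281 : ℝ) * Real.exp (-(10 / (1 - (21/8 : ℝ) ^ 2 / 25))) := by
  rw [gf]; norm_num
lemma E36 : (1850491869/2500000000000000 : ℝ) ≤ Real.exp (-(10 / (1 - (27/10 : ℝ) ^ 2 / 25))) ∧ Real.exp (-(10 / (1 - (27/10 : ℝ) ^ 2 / 25))) ≤ (740243153/1000000000000000 : ℝ) :=
  epb 14 _ (206/1771 : ℝ) (1850491869/2500000000000000 : ℝ) (740243153/1000000000000000 : ℝ) (by norm_num) (by norm_num) (by norm_num) (by norm_num) (by norm_num) (by norm_num)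
lemma gv36 : gf (27/10 : ℝ) = (-67500000/3136441 : ℝ) * Real.exp (-(10 / (1 - (27/10 : ℝ) ^ 2 / 25))) := by
  rw [gf]; norm_num
lemma E37 : (2647234323/5000000000000000 : ℝ) ≤ Real.exp (-(10 / (1 - (111/40 : ℝ) ^ 2 / 25))) ∧ Real.exp (-(10 / (1 - (111/40 : ℝ) ^ 2 / 25))) ≤ (1323733173/2500000000000000 : ℝ) :=
  epb 14 _ (12494/27679 : ℝ) (2647234323/5000000000000000 : ℝ) (1323733173/2500000000000000 : ℝ) (by norm_num) (by norm_num) (by norm_num) (by norm_num) (by norm_num) (by norm_num)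
lemma gv37 : gf (111/40 : ℝ) = (-17760000000/766127041 : ℝ) * Real.exp (-(10 / (1 - (111/40 : ℝ) ^ 2 / 25))) := by
  rw [gf]; norm_num
lemma E38 : (3689174299/10000000000000000 : ℝ) ≤ Real.exp (-(10 / (1 - (57/20 : ℝ) ^ 2 / 25))) ∧ Real.exp (-(10 / (1 - (57/20 : ℝ) ^ 2 / 25))) ≤ (1844819169/5000000000000000 : ℝ) :=
  epb 14 _ (5486/6751 : ℝ) (3689174299/10000000000000000 : ℝ) (1844819169/5000000000000000 : ℝ) (by norm_num) (by norm_num) (by norm_num) (by norm_num) (by norm_num) (by norm_num)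
lemma gv38 : gf (57/20 : ℝ) = (-1140000000/45576001 : ℝ) * Real.exp (-(10 / (1 - (57/20 : ℝ) ^ 2 / 25))) := by
  rw [gf]; norm_num
lemma E39 : (499502167/2000000000000000 : ℝ) ≤ Real.exp (-(10 / (1 - (117/40 : ℝ) ^ 2 / 25))) ∧ Real.exp (-(10 / (1 - (117/40 : ℝ) ^ 2 / 25))) ≤ (156105097/625000000000000 : ℝ) :=
  epb 15 _ (5335/26311 : ℝ) (499502167/2000000000000000 : ℝ) (156105097/625000000000000 : ℝ) (by norm_num) (by norm_num) (by norm_num) (by norm_num) (by norm_num) (by norm_num)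
lemma gv39 : gf (117/40 : ℝ) = (-18720000000/692268721 : ℝ) * Real.exp (-(10 / (1 - (117/40 : ℝ) ^ 2 / 25))) := by
  rw [gf]; norm_num
lemma E40 : (818645061/5000000000000000 : ℝ) ≤ Real.exp (-(10 / (1 - (3 : ℝ) ^ 2 / 25))) ∧ Real.exp (-(10 / (1 - (3 : ℝ) ^ 2 / 25))) ≤ (327492167/2000000000000000 : ℝ) :=
  epb 15 _ (5/8 : ℝ) (818645061/5000000000000000 : ℝ) (327492167/2000000000000000 : ℝ) (by norm_num) (by norm_num) (by norm_num) (by norm_num) (by norm_num) (by norm_num)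
lemma gv40 : gf (3 : ℝ) = (-1875/64 : ℝ) * Real.exp (-(10 / (1 - (3 : ℝ) ^ 2 / 25))) := by
  rw [gf]; norm_num
lemma U0 : (∫ y in (0 : ℝ)..(3/40 : ℝ), gf y ^ 2) ≤ (139261/10000000000000000 : ℝ) :=
  cellU (by norm_num) (by norm_num) (by norm_num) E0.2 (by norm_num)
lemma L0 : ((49287/20000000000000 : ℝ)) ≤ ∫ y in (0 : ℝ)..(3/40 : ℝ), hf y ^ 2 := by
  apply cellL (m := (-90637/500000000 : ℝ)) (by norm_num) (by norm_num) (by norm_num)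
  rw [gv0, gv1]
  nlinarith [E0.1, E0.2, E1.1, E1.2]
lemma U1 : (∫ y in (3/40 : ℝ)..(3/20 : ℝ), gf y ^ 2) ≤ (556043/10000000000000000 : ℝ) :=
  cellU (by norm_num) (by norm_num) (by norm_num) E1.2 (by norm_num)
lemma L1 : ((241121/100000000000000 : ℝ)) ≤ ∫ y in (3/40 : ℝ)..(3/20 : ℝ), hf y ^ 2 := by
  apply cellL (m := (-179319/1000000000 : ℝ)) (by norm_num) (by norm_num) (by norm_num)
  rw [gv1, gv2]
  nlinarith [E1.1, E1.2, E2.1, E2.2]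
lemma U2 : (∫ y in (3/20 : ℝ)..(9/40 : ℝ), gf y ^ 2) ≤ (30997/250000000000000 : ℝ) :=
  cellU (by norm_num) (by norm_num) (by norm_num) E2.2 (by norm_num)
lemma L2 : ((5769/2500000000000 : ℝ)) ≤ ∫ y in (3/20 : ℝ)..(9/40 : ℝ), hf y ^ 2 := by
  apply cellL (m := (-87717/500000000 : ℝ)) (by norm_num) (by norm_num) (by norm_num)
  rw [gv2, gv3]
  nlinarith [E2.1, E2.2, E3.1, E3.2]
lemma U3 : (∫ y in (9/40 : ℝ)..(3/10 : ℝ), gf y ^ 2) ≤ (21687/100000000000000 : ℝ) :=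
  cellU (by norm_num) (by norm_num) (by norm_num) E3.2 (by norm_num)
lemma L3 : ((215817/100000000000000 : ℝ)) ≤ ∫ y in (9/40 : ℝ)..(3/10 : ℝ), hf y ^ 2 := by
  apply cellL (m := (-16967/100000000 : ℝ)) (by norm_num) (by norm_num) (by norm_num)
  rw [gv3, gv4]
  nlinarith [E3.1, E3.2, E4.1, E4.2]
lemma U4 : (∫ y in (3/10 : ℝ)..(3/8 : ℝ), gf y ^ 2) ≤ (10343/31250000000000 : ℝ) :=
  cellU (by norm_num) (by norm_num) (by norm_num) E4.2 (by norm_num)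
lemma L4 : ((49241/25000000000000 : ℝ)) ≤ ∫ y in (3/10 : ℝ)..(3/8 : ℝ), hf y ^ 2 := by
  apply cellL (m := (-81051/500000000 : ℝ)) (by norm_num) (by norm_num) (by norm_num)
  rw [gv4, gv5]
  nlinarith [E4.1, E4.2, E5.1, E5.2]
lemma U5 : (∫ y in (3/8 : ℝ)..(9/20 : ℝ), gf y ^ 2) ≤ (462101/1000000000000000 : ℝ) :=
  cellU (by norm_num) (by norm_num) (by norm_num) E5.2 (by norm_num)
lemma L5 : ((87521/50000000000000 : ℝ)) ≤ ∫ y in (3/8 : ℝ)..(9/20 : ℝ), hf y ^ 2 := by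
  apply cellL (m := (-38207/250000000 : ℝ)) (by norm_num) (by norm_num) (by norm_num)
  rw [gv5, gv6]
  nlinarith [E5.1, E5.2, E6.1, E6.2]
lemma U6 : (∫ y in (9/20 : ℝ)..(21/40 : ℝ), gf y ^ 2) ≤ (605293/1000000000000000 : ℝ) :=
  cellU (by norm_num) (by norm_num) (by norm_num) E6.2 (by norm_num)
lemma L6 : ((151023/100000000000000 : ℝ)) ≤ ∫ y in (9/20 : ℝ)..(21/40 : ℝ), hf y ^ 2 := by
  apply cellL (m := (-14197/100000000 : ℝ)) (by norm_num) (by norm_num) (by norm_num)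
  rw [gv6, gv7]
  nlinarith [E6.1, E6.2, E7.1, E7.2]
lemma U7 : (∫ y in (21/40 : ℝ)..(3/5 : ℝ), gf y ^ 2) ≤ (377537/500000000000000 : ℝ) :=
  cellU (by norm_num) (by norm_num) (by norm_num) E7.2 (by norm_num)
lemma L7 : ((125959/100000000000000 : ℝ)) ≤ ∫ y in (21/40 : ℝ)..(3/5 : ℝ), hf y ^ 2 := by
  apply cellL (m := (-16209/125000000 : ℝ)) (by norm_num) (by norm_num) (by norm_num)
  rw [gv7, gv8]
  nlinarith [E7.1, E7.2, E8.1, E8.2]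
lemma U8 : (∫ y in (3/5 : ℝ)..(27/40 : ℝ), gf y ^ 2) ≤ (905681/1000000000000000 : ℝ) :=
  cellU (by norm_num) (by norm_num) (by norm_num) E8.2 (by norm_num)
lemma L8 : ((100933/100000000000000 : ℝ)) ≤ ∫ y in (3/5 : ℝ)..(27/40 : ℝ), hf y ^ 2 := by
  apply cellL (m := (-116097/1000000000 : ℝ)) (by norm_num) (by norm_num) (by norm_num)
  rw [gv8, gv9]
  nlinarith [E8.1, E8.2, E9.1, E9.2]
lemma U9 : (∫ y in (27/40 : ℝ)..(3/4 : ℝ), gf y ^ 2) ≤ (105133/100000000000000 : ℝ) :=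
  cellU (by norm_num) (by norm_num) (by norm_num) E9.2 (by norm_num)
lemma L9 : ((385013/500000000000000 : ℝ)) ≤ ∫ y in (27/40 : ℝ)..(3/4 : ℝ), hf y ^ 2 := by
  apply cellL (m := (-101427/1000000000 : ℝ)) (by norm_num) (by norm_num) (by norm_num)
  rw [gv9, gv10]
  nlinarith [E9.1, E9.2, E10.1, E10.2]
lemma U10 : (∫ y in (3/4 : ℝ)..(33/40 : ℝ), gf y ^ 2) ≤ (59323/50000000000000 : ℝ) :=
  cellU (by norm_num) (by norm_num) (by norm_num) E10.2 (by norm_num)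
lemma L10 : ((110291/200000000000000 : ℝ)) ≤ ∫ y in (3/4 : ℝ)..(33/40 : ℝ), hf y ^ 2 := by
  apply cellL (m := (-429301/5000000000 : ℝ)) (by norm_num) (by norm_num) (by norm_num)
  rw [gv10, gv11]
  nlinarith [E10.1, E10.2, E11.1, E11.2]
lemma U11 : (∫ y in (33/40 : ℝ)..(9/10 : ℝ), gf y ^ 2) ≤ (65299/50000000000000 : ℝ) :=
  cellU (by norm_num) (by norm_num) (by norm_num) E11.2 (by norm_num)
lemma L11 : ((362117/1000000000000000 : ℝ)) ≤ ∫ y in (33/40 : ℝ)..(9/10 : ℝ), hf y ^ 2 := by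
  apply cellL (m := (-139219/2000000000 : ℝ)) (by norm_num) (by norm_num) (by norm_num)
  rw [gv11, gv12]
  nlinarith [E11.1, E11.2, E12.1, E12.2]
lemma U12 : (∫ y in (9/10 : ℝ)..(39/40 : ℝ), gf y ^ 2) ≤ (140551/100000000000000 : ℝ) :=
  cellU (by norm_num) (by norm_num) (by norm_num) E12.2 (by norm_num)
lemma L12 : ((208789/1000000000000000 : ℝ)) ≤ ∫ y in (9/10 : ℝ)..(39/40 : ℝ), hf y ^ 2 := by
  apply cellL (m := (-264493/5000000000 : ℝ)) (by norm_num) (by norm_num) (by norm_num)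
  rw [gv12, gv13]
  nlinarith [E12.1, E12.2, E13.1, E13.2]
lemma U13 : (∫ y in (39/40 : ℝ)..(21/20 : ℝ), gf y ^ 2) ≤ (148157/100000000000000 : ℝ) :=
  cellU (by norm_num) (by norm_num) (by norm_num) E13.2 (by norm_num)
lemma L13 : ((480909/5000000000000000 : ℝ)) ≤ ∫ y in (39/40 : ℝ)..(21/20 : ℝ), hf y ^ 2 := by
  apply cellL (m := (-359601/10000000000 : ℝ)) (by norm_num) (by norm_num) (by norm_num)
  rw [gv13, gv14]
  nlinarith [E13.1, E13.2, E14.1, E14.2]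
lemma U14 : (∫ y in (21/20 : ℝ)..(9/8 : ℝ), gf y ^ 2) ≤ (153167/100000000000000 : ℝ) :=
  cellU (by norm_num) (by norm_num) (by norm_num) E14.2 (by norm_num)
lemma L14 : ((267031/10000000000000000 : ℝ)) ≤ ∫ y in (21/20 : ℝ)..(9/8 : ℝ), hf y ^ 2 := by
  apply cellL (m := (-95159/5000000000 : ℝ)) (by norm_num) (by norm_num) (by norm_num)
  rw [gv14, gv15]
  nlinarith [E14.1, E14.2, E15.1, E15.2]
lemma U15 : (∫ y in (9/8 : ℝ)..(6/5 : ℝ), gf y ^ 2) ≤ (19431/12500000000000 : ℝ) :=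
  cellU (by norm_num) (by norm_num) (by norm_num) E15.2 (by norm_num)
lemma L15 : ((353293/1000000000000000000 : ℝ)) ≤ ∫ y in (9/8 : ℝ)..(6/5 : ℝ), hf y ^ 2 := by
  apply cellL (m := (-23531/10000000000 : ℝ)) (by norm_num) (by norm_num) (by norm_num)
  rw [gv15, gv16]
  nlinarith [E15.1, E15.2, E16.1, E16.2]
lemma U16 : (∫ y in (6/5 : ℝ)..(51/40 : ℝ), gf y ^ 2) ≤ (77489/50000000000000 : ℝ) :=
  cellU (by norm_num) (by norm_num) (by norm_num) E16.2 (by norm_num)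
lemma L16 : ((13969/1000000000000000 : ℝ)) ≤ ∫ y in (6/5 : ℝ)..(51/40 : ℝ), hf y ^ 2 := by
  apply cellL (m := (69193/5000000000 : ℝ)) (by norm_num) (by norm_num) (by norm_num)
  rw [gv16, gv17]
  nlinarith [E16.1, E16.2, E17.1, E17.2]
lemma U17 : (∫ y in (51/40 : ℝ)..(27/20 : ℝ), gf y ^ 2) ≤ (37963/25000000000000 : ℝ) :=
  cellU (by norm_num) (by norm_num) (by norm_num) E17.2 (by norm_num)
lemma L17 : ((317723/5000000000000000 : ℝ)) ≤ ∫ y in (51/40 : ℝ)..(27/20 : ℝ), hf y ^ 2 := by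
  apply cellL (m := (293131/10000000000 : ℝ)) (by norm_num) (by norm_num) (by norm_num)
  rw [gv17, gv18]
  nlinarith [E17.1, E17.2, E18.1, E18.2]
lemma U18 : (∫ y in (27/20 : ℝ)..(57/40 : ℝ), gf y ^ 2) ≤ (29253/20000000000000 : ℝ) :=
  cellU (by norm_num) (by norm_num) (by norm_num) E18.2 (by norm_num)
lemma L18 : ((142783/1000000000000000 : ℝ)) ≤ ∫ y in (27/20 : ℝ)..(57/40 : ℝ), hf y ^ 2 := by
  apply cellL (m := (43853/1000000000 : ℝ)) (by norm_num) (by norm_num) (by norm_num)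
  rw [gv18, gv19]
  nlinarith [E18.1, E18.2, E19.1, E19.2]
lemma U19 : (∫ y in (57/40 : ℝ)..(3/2 : ℝ), gf y ^ 2) ≤ (69253/50000000000000 : ℝ) :=
  cellU (by norm_num) (by norm_num) (by norm_num) E19.2 (by norm_num)
lemma L19 : ((243889/1000000000000000 : ℝ)) ≤ ∫ y in (57/40 : ℝ)..(3/2 : ℝ), hf y ^ 2 := by
  apply cellL (m := (572619/10000000000 : ℝ)) (by norm_num) (by norm_num) (by norm_num)
  rw [gv19, gv20]
  nlinarith [E19.1, E19.2, E20.1, E20.2]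
lemma U20 : (∫ y in (3/2 : ℝ)..(63/40 : ℝ), gf y ^ 2) ≤ (128933/100000000000000 : ℝ) :=
  cellU (by norm_num) (by norm_num) (by norm_num) E20.2 (by norm_num)
lemma L20 : ((356879/1000000000000000 : ℝ)) ≤ ∫ y in (3/2 : ℝ)..(63/40 : ℝ), hf y ^ 2 := by
  apply cellL (m := (691519/10000000000 : ℝ)) (by norm_num) (by norm_num) (by norm_num)
  rw [gv20, gv21]
  nlinarith [E20.1, E20.2, E21.1, E21.2]
lemma U21 : (∫ y in (63/40 : ℝ)..(33/20 : ℝ), gf y ^ 2) ≤ (58987/50000000000000 : ℝ) :=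
  cellU (by norm_num) (by norm_num) (by norm_num) E21.2 (by norm_num)
lemma L21 : ((238019/500000000000000 : ℝ)) ≤ ∫ y in (63/40 : ℝ)..(33/20 : ℝ), hf y ^ 2 := by
  apply cellL (m := (797691/10000000000 : ℝ)) (by norm_num) (by norm_num) (by norm_num)
  rw [gv21, gv22]
  nlinarith [E21.1, E21.2, E22.1, E22.2]
lemma U22 : (∫ y in (33/20 : ℝ)..(69/40 : ℝ), gf y ^ 2) ≤ (53031/50000000000000 : ℝ) :=
  cellU (by norm_num) (by norm_num) (by norm_num) E22.2 (by norm_num)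
lemma L22 : ((73499/125000000000000 : ℝ)) ≤ ∫ y in (33/20 : ℝ)..(69/40 : ℝ), hf y ^ 2 := by
  apply cellL (m := (886501/10000000000 : ℝ)) (by norm_num) (by norm_num) (by norm_num)
  rw [gv22, gv23]
  nlinarith [E22.1, E22.2, E23.1, E23.2]
lemma U23 : (∫ y in (69/40 : ℝ)..(9/5 : ℝ), gf y ^ 2) ≤ (23411/25000000000000 : ℝ) :=
  cellU (by norm_num) (by norm_num) (by norm_num) E23.2 (by norm_num)
lemma L23 : ((137269/200000000000000 : ℝ)) ≤ ∫ y in (69/40 : ℝ)..(9/5 : ℝ), hf y ^ 2 := by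
  apply cellL (m := (478883/5000000000 : ℝ)) (by norm_num) (by norm_num) (by norm_num)
  rw [gv23, gv24]
  nlinarith [E23.1, E23.2, E24.1, E24.2]
lemma U24 : (∫ y in (9/5 : ℝ)..(15/8 : ℝ), gf y ^ 2) ≤ (811521/1000000000000000 : ℝ) :=
  cellU (by norm_num) (by norm_num) (by norm_num) E24.2 (by norm_num)
lemma L24 : ((95547/125000000000000 : ℝ)) ≤ ∫ y in (9/5 : ℝ)..(15/8 : ℝ), hf y ^ 2 := by
  apply cellL (m := (25269/250000000 : ℝ)) (by norm_num) (by norm_num) (by norm_num)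
  rw [gv24, gv25]
  nlinarith [E24.1, E24.2, E25.1, E25.2]
lemma U25 : (∫ y in (15/8 : ℝ)..(39/20 : ℝ), gf y ^ 2) ≤ (689763/1000000000000000 : ℝ) :=
  cellU (by norm_num) (by norm_num) (by norm_num) E25.2 (by norm_num)
lemma L25 : ((408621/500000000000000 : ℝ)) ≤ ∫ y in (15/8 : ℝ)..(39/20 : ℝ), hf y ^ 2 := by
  apply cellL (m := (104517/1000000000 : ℝ)) (by norm_num) (by norm_num) (by norm_num)
  rw [gv25, gv26]
  nlinarith [E25.1, E25.2, E26.1, E26.2]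
lemma U26 : (∫ y in (39/20 : ℝ)..(81/40 : ℝ), gf y ^ 2) ≤ (574517/1000000000000000 : ℝ) :=
  cellU (by norm_num) (by norm_num) (by norm_num) E26.2 (by norm_num)
lemma L26 : ((842401/1000000000000000 : ℝ)) ≤ ∫ y in (39/20 : ℝ)..(81/40 : ℝ), hf y ^ 2 := by
  apply cellL (m := (2653/25000000 : ℝ)) (by norm_num) (by norm_num) (by norm_num)
  rw [gv26, gv27]
  nlinarith [E26.1, E26.2, E27.1, E27.2]
lemma U27 : (∫ y in (81/40 : ℝ)..(21/10 : ℝ), gf y ^ 2) ≤ (117109/250000000000000 : ℝ) :=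
  cellU (by norm_num) (by norm_num) (by norm_num) E27.2 (by norm_num)
lemma L27 : ((838097/1000000000000000 : ℝ)) ≤ ∫ y in (81/40 : ℝ)..(21/10 : ℝ), hf y ^ 2 := by
  apply cellL (m := (10581/100000000 : ℝ)) (by norm_num) (by norm_num) (by norm_num)
  rw [gv27, gv28]
  nlinarith [E27.1, E27.2, E28.1, E28.2]
lemma U28 : (∫ y in (21/10 : ℝ)..(87/40 : ℝ), gf y ^ 2) ≤ (37349/100000000000000 : ℝ) :=
  cellU (by norm_num) (by norm_num) (by norm_num) E28.2 (by norm_num)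
lemma L28 : ((808681/1000000000000000 : ℝ)) ≤ ∫ y in (21/10 : ℝ)..(87/40 : ℝ), hf y ^ 2 := by
  apply cellL (m := (12987/125000000 : ℝ)) (by norm_num) (by norm_num) (by norm_num)
  rw [gv28, gv29]
  nlinarith [E28.1, E28.2, E29.1, E29.2]
lemma U29 : (∫ y in (87/40 : ℝ)..(9/4 : ℝ), gf y ^ 2) ≤ (72699/250000000000000 : ℝ) :=
  cellU (by norm_num) (by norm_num) (by norm_num) E29.2 (by norm_num)
lemma L29 : ((377157/500000000000000 : ℝ)) ≤ ∫ y in (87/40 : ℝ)..(9/4 : ℝ), hf y ^ 2 := by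
  apply cellL (m := (100349/1000000000 : ℝ)) (by norm_num) (by norm_num) (by norm_num)
  rw [gv29, gv30]
  nlinarith [E29.1, E29.2, E30.1, E30.2]
lemma U30 : (∫ y in (9/4 : ℝ)..(93/40 : ℝ), gf y ^ 2) ≤ (220753/1000000000000000 : ℝ) :=
  cellU (by norm_num) (by norm_num) (by norm_num) E30.2 (by norm_num)
lemma L30 : ((68139/100000000000000 : ℝ)) ≤ ∫ y in (9/4 : ℝ)..(93/40 : ℝ), hf y ^ 2 := by
  apply cellL (m := (953833/10000000000 : ℝ)) (by norm_num) (by norm_num) (by norm_num)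
  rw [gv30, gv31]
  nlinarith [E30.1, E30.2, E31.1, E31.2]
lemma U31 : (∫ y in (93/40 : ℝ)..(12/5 : ℝ), gf y ^ 2) ≤ (81553/500000000000000 : ℝ) :=
  cellU (by norm_num) (by norm_num) (by norm_num) E31.2 (by norm_num)
lemma L31 : ((596039/1000000000000000 : ℝ)) ≤ ∫ y in (93/40 : ℝ)..(12/5 : ℝ), hf y ^ 2 := by
  apply cellL (m := (892187/10000000000 : ℝ)) (by norm_num) (by norm_num) (by norm_num)
  rw [gv31, gv32]
  nlinarith [E31.1, E31.2, E32.1, E32.2]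
lemma U32 : (∫ y in (12/5 : ℝ)..(99/40 : ℝ), gf y ^ 2) ≤ (29263/250000000000000 : ℝ) :=
  cellU (by norm_num) (by norm_num) (by norm_num) E32.2 (by norm_num)
lemma L32 : ((251801/500000000000000 : ℝ)) ≤ ∫ y in (12/5 : ℝ)..(99/40 : ℝ), hf y ^ 2 := by
  apply cellL (m := (819949/10000000000 : ℝ)) (by norm_num) (by norm_num) (by norm_num)
  rw [gv32, gv33]
  nlinarith [E32.1, E32.2, E33.1, E33.2]
lemma U33 : (∫ y in (99/40 : ℝ)..(51/20 : ℝ), gf y ^ 2) ≤ (407099/5000000000000000 : ℝ) :=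
  cellU (by norm_num) (by norm_num) (by norm_num) E33.2 (by norm_num)
lemma L33 : ((205873/500000000000000 : ℝ)) ≤ ∫ y in (99/40 : ℝ)..(51/20 : ℝ), hf y ^ 2 := by
  apply cellL (m := (148249/2000000000 : ℝ)) (by norm_num) (by norm_num) (by norm_num)
  rw [gv33, gv34]
  nlinarith [E33.1, E33.2, E34.1, E34.2]
lemma U34 : (∫ y in (51/20 : ℝ)..(21/8 : ℝ), gf y ^ 2) ≤ (547459/10000000000000000 : ℝ) :=
  cellU (by norm_num) (by norm_num) (by norm_num) E34.2 (by norm_num)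
lemma L34 : ((633/1953125000000 : ℝ)) ≤ ∫ y in (51/20 : ℝ)..(21/8 : ℝ), hf y ^ 2 := by
  apply cellL (m := (65769/1000000000 : ℝ)) (by norm_num) (by norm_num) (by norm_num)
  rw [gv34, gv35]
  nlinarith [E34.1, E34.2, E35.1, E35.2]
lemma U35 : (∫ y in (21/8 : ℝ)..(27/10 : ℝ), gf y ^ 2) ≤ (354787/10000000000000000 : ℝ) :=
  cellU (by norm_num) (by norm_num) (by norm_num) E35.2 (by norm_num)
lemma L35 : ((245351/1000000000000000 : ℝ)) ≤ ∫ y in (21/8 : ℝ)..(27/10 : ℝ), hf y ^ 2 := by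
  apply cellL (m := (17881/312500000 : ℝ)) (by norm_num) (by norm_num) (by norm_num)
  rw [gv35, gv36]
  nlinarith [E35.1, E35.2, E36.1, E36.2]
lemma U36 : (∫ y in (27/10 : ℝ)..(111/40 : ℝ), gf y ^ 2) ≤ (220849/10000000000000000 : ℝ) :=
  cellU (by norm_num) (by norm_num) (by norm_num) E36.2 (by norm_num)
lemma L36 : ((35633/200000000000000 : ℝ)) ≤ ∫ y in (27/10 : ℝ)..(111/40 : ℝ), hf y ^ 2 := by
  apply cellL (m := (487533/10000000000 : ℝ)) (by norm_num) (by norm_num) (by norm_num)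
  rw [gv36, gv37]
  nlinarith [E36.1, E36.2, E37.1, E37.2]
lemma U37 : (∫ y in (111/40 : ℝ)..(57/20 : ℝ), gf y ^ 2) ≤ (131559/10000000000000000 : ℝ) :=
  cellU (by norm_num) (by norm_num) (by norm_num) E37.2 (by norm_num)
lemma L37 : ((123581/1000000000000000 : ℝ)) ≤ ∫ y in (111/40 : ℝ)..(57/20 : ℝ), hf y ^ 2 := by
  apply cellL (m := (203037/5000000000 : ℝ)) (by norm_num) (by norm_num) (by norm_num)
  rw [gv37, gv38]
  nlinarith [E37.1, E37.2, E38.1, E38.2]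
lemma U38 : (∫ y in (57/20 : ℝ)..(117/40 : ℝ), gf y ^ 2) ≤ (373303/50000000000000000 : ℝ) :=
  cellU (by norm_num) (by norm_num) (by norm_num) E38.2 (by norm_num)
lemma L38 : ((815879/10000000000000000 : ℝ)) ≤ ∫ y in (57/20 : ℝ)..(117/40 : ℝ), hf y ^ 2 := by
  apply cellL (m := (82483/2500000000 : ℝ)) (by norm_num) (by norm_num) (by norm_num)
  rw [gv38, gv39]
  nlinarith [E38.1, E38.2, E39.1, E39.2]
lemma U39 : (∫ y in (117/40 : ℝ)..(3 : ℝ), gf y ^ 2) ≤ (200793/50000000000000000 : ℝ) :=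
  cellU (by norm_num) (by norm_num) (by norm_num) E39.2 (by norm_num)
lemma L39 : ((510333/10000000000000000 : ℝ)) ≤ ∫ y in (117/40 : ℝ)..(3 : ℝ), hf y ^ 2 := by
  apply cellL (m := (260917/10000000000 : ℝ)) (by norm_num) (by norm_num) (by norm_num)
  rw [gv39, gv40]
  nlinarith [E39.1, E39.2, E40.1, E40.2]
lemma SU39 : (∫ y in (117/40 : ℝ)..(3:ℝ), gf y ^ 2) ≤ (200793/50000000000000000 : ℝ) := U39
lemma SL39 : ((510333/10000000000000000 : ℝ)) ≤ ∫ y in (117/40 : ℝ)..(3:ℝ), hf y ^ 2 := L39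
lemma SU38 : (∫ y in (57/20 : ℝ)..(3:ℝ), gf y ^ 2) ≤ (35881/3125000000000000 : ℝ) := by
  have hsplit := intervalIntegral.integral_add_adjacent_intervals
    (IIg2 (a := (57/20 : ℝ)) (b := (117/40 : ℝ)) (by norm_num) (by norm_num) (by norm_num))
    (IIg2 (a := (117/40 : ℝ)) (b := (3:ℝ)) (by norm_num) (by norm_num) (by norm_num))
  linarith [U38, SU39, hsplit]
lemma SL38 : ((331553/2500000000000000 : ℝ)) ≤ ∫ y in (57/20 : ℝ)..(3:ℝ), hf y ^ 2 := by
  have hsplit := intervalIntegral.integral_add_adjacent_intervals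
    (IIh2 (a := (57/20 : ℝ)) (b := (117/40 : ℝ)) (by norm_num) (by norm_num) (by norm_num))
    (IIh2 (a := (117/40 : ℝ)) (b := (3:ℝ)) (by norm_num) (by norm_num) (by norm_num))
  linarith [L38, SL39, hsplit]
lemma SU37 : (∫ y in (111/40 : ℝ)..(3:ℝ), gf y ^ 2) ≤ (1231891/50000000000000000 : ℝ) := by
  have hsplit := intervalIntegral.integral_add_adjacent_intervals
    (IIg2 (a := (111/40 : ℝ)) (b := (57/20 : ℝ)) (by norm_num) (by norm_num) (by norm_num))
    (IIg2 (a := (57/20 : ℝ)) (b := (3:ℝ)) (by norm_num) (by norm_num) (by norm_num))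
  linarith [U37, SU38, hsplit]
lemma SL37 : ((1281011/5000000000000000 : ℝ)) ≤ ∫ y in (111/40 : ℝ)..(3:ℝ), hf y ^ 2 := by
  have hsplit := intervalIntegral.integral_add_adjacent_intervals
    (IIh2 (a := (111/40 : ℝ)) (b := (57/20 : ℝ)) (by norm_num) (by norm_num) (by norm_num))
    (IIh2 (a := (57/20 : ℝ)) (b := (3:ℝ)) (by norm_num) (by norm_num) (by norm_num))
  linarith [L37, SL38, hsplit]
lemma SU36 : (∫ y in (27/10 : ℝ)..(3:ℝ), gf y ^ 2) ≤ (292017/6250000000000000 : ℝ) := by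
  have hsplit := intervalIntegral.integral_add_adjacent_intervals
    (IIg2 (a := (27/10 : ℝ)) (b := (111/40 : ℝ)) (by norm_num) (by norm_num) (by norm_num))
    (IIg2 (a := (111/40 : ℝ)) (b := (3:ℝ)) (by norm_num) (by norm_num) (by norm_num))
  linarith [U36, SU37, hsplit]
lemma SL36 : ((542959/1250000000000000 : ℝ)) ≤ ∫ y in (27/10 : ℝ)..(3:ℝ), hf y ^ 2 := by
  have hsplit := intervalIntegral.integral_add_adjacent_intervals
    (IIh2 (a := (27/10 : ℝ)) (b := (111/40 : ℝ)) (by norm_num) (by norm_num) (by norm_num))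
    (IIh2 (a := (111/40 : ℝ)) (b := (3:ℝ)) (by norm_num) (by norm_num) (by norm_num))
  linarith [L36, SL37, hsplit]
lemma SU35 : (∫ y in (21/8 : ℝ)..(3:ℝ), gf y ^ 2) ≤ (4110071/50000000000000000 : ℝ) := by
  have hsplit := intervalIntegral.integral_add_adjacent_intervals
    (IIg2 (a := (21/8 : ℝ)) (b := (27/10 : ℝ)) (by norm_num) (by norm_num) (by norm_num))
    (IIg2 (a := (27/10 : ℝ)) (b := (3:ℝ)) (by norm_num) (by norm_num) (by norm_num))
  linarith [U35, SU36, hsplit]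
lemma SL35 : ((3398591/5000000000000000 : ℝ)) ≤ ∫ y in (21/8 : ℝ)..(3:ℝ), hf y ^ 2 := by
  have hsplit := intervalIntegral.integral_add_adjacent_intervals
    (IIh2 (a := (21/8 : ℝ)) (b := (27/10 : ℝ)) (by norm_num) (by norm_num) (by norm_num))
    (IIh2 (a := (27/10 : ℝ)) (b := (3:ℝ)) (by norm_num) (by norm_num) (by norm_num))
  linarith [L35, SL36, hsplit]
lemma SU34 : (∫ y in (51/20 : ℝ)..(3:ℝ), gf y ^ 2) ≤ (3423683/25000000000000000 : ℝ) := by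
  have hsplit := intervalIntegral.integral_add_adjacent_intervals
    (IIg2 (a := (51/20 : ℝ)) (b := (21/8 : ℝ)) (by norm_num) (by norm_num) (by norm_num))
    (IIg2 (a := (21/8 : ℝ)) (b := (3:ℝ)) (by norm_num) (by norm_num) (by norm_num))
  linarith [U34, SU35, hsplit]
lemma SL34 : ((5019071/5000000000000000 : ℝ)) ≤ ∫ y in (51/20 : ℝ)..(3:ℝ), hf y ^ 2 := by
  have hsplit := intervalIntegral.integral_add_adjacent_intervals
    (IIh2 (a := (51/20 : ℝ)) (b := (21/8 : ℝ)) (by norm_num) (by norm_num) (by norm_num))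
    (IIh2 (a := (21/8 : ℝ)) (b := (3:ℝ)) (by norm_num) (by norm_num) (by norm_num))
  linarith [L34, SL35, hsplit]
lemma SU33 : (∫ y in (99/40 : ℝ)..(3:ℝ), gf y ^ 2) ≤ (2729589/12500000000000000 : ℝ) := by
  have hsplit := intervalIntegral.integral_add_adjacent_intervals
    (IIg2 (a := (99/40 : ℝ)) (b := (51/20 : ℝ)) (by norm_num) (by norm_num) (by norm_num))
    (IIg2 (a := (51/20 : ℝ)) (b := (3:ℝ)) (by norm_num) (by norm_num) (by norm_num))
  linarith [U33, SU34, hsplit]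
lemma SL33 : ((7077801/5000000000000000 : ℝ)) ≤ ∫ y in (99/40 : ℝ)..(3:ℝ), hf y ^ 2 := by
  have hsplit := intervalIntegral.integral_add_adjacent_intervals
    (IIh2 (a := (99/40 : ℝ)) (b := (51/20 : ℝ)) (by norm_num) (by norm_num) (by norm_num))
    (IIh2 (a := (51/20 : ℝ)) (b := (3:ℝ)) (by norm_num) (by norm_num) (by norm_num))
  linarith [L33, SL34, hsplit]
lemma SU32 : (∫ y in (12/5 : ℝ)..(3:ℝ), gf y ^ 2) ≤ (4192739/12500000000000000 : ℝ) := by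
  have hsplit := intervalIntegral.integral_add_adjacent_intervals
    (IIg2 (a := (12/5 : ℝ)) (b := (99/40 : ℝ)) (by norm_num) (by norm_num) (by norm_num))
    (IIg2 (a := (99/40 : ℝ)) (b := (3:ℝ)) (by norm_num) (by norm_num) (by norm_num))
  linarith [U32, SU33, hsplit]
lemma SL32 : ((9595811/5000000000000000 : ℝ)) ≤ ∫ y in (12/5 : ℝ)..(3:ℝ), hf y ^ 2 := by
  have hsplit := intervalIntegral.integral_add_adjacent_intervals
    (IIh2 (a := (12/5 : ℝ)) (b := (99/40 : ℝ)) (by norm_num) (by norm_num) (by norm_num))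
    (IIh2 (a := (99/40 : ℝ)) (b := (3:ℝ)) (by norm_num) (by norm_num) (by norm_num))
  linarith [L32, SL33, hsplit]
lemma SU31 : (∫ y in (93/40 : ℝ)..(3:ℝ), gf y ^ 2) ≤ (1557891/3125000000000000 : ℝ) := by
  have hsplit := intervalIntegral.integral_add_adjacent_intervals
    (IIg2 (a := (93/40 : ℝ)) (b := (12/5 : ℝ)) (by norm_num) (by norm_num) (by norm_num))
    (IIg2 (a := (12/5 : ℝ)) (b := (3:ℝ)) (by norm_num) (by norm_num) (by norm_num))
  linarith [U31, SU32, hsplit]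
lemma SL31 : ((6288003/2500000000000000 : ℝ)) ≤ ∫ y in (93/40 : ℝ)..(3:ℝ), hf y ^ 2 := by
  have hsplit := intervalIntegral.integral_add_adjacent_intervals
    (IIh2 (a := (93/40 : ℝ)) (b := (12/5 : ℝ)) (by norm_num) (by norm_num) (by norm_num))
    (IIh2 (a := (12/5 : ℝ)) (b := (3:ℝ)) (by norm_num) (by norm_num) (by norm_num))
  linarith [L31, SL32, hsplit]
lemma SU30 : (∫ y in (9/4 : ℝ)..(3:ℝ), gf y ^ 2) ≤ (17981953/25000000000000000 : ℝ) := by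
  have hsplit := intervalIntegral.integral_add_adjacent_intervals
    (IIg2 (a := (9/4 : ℝ)) (b := (93/40 : ℝ)) (by norm_num) (by norm_num) (by norm_num))
    (IIg2 (a := (93/40 : ℝ)) (b := (3:ℝ)) (by norm_num) (by norm_num) (by norm_num))
  linarith [U30, SU31, hsplit]
lemma SL30 : ((3995739/1250000000000000 : ℝ)) ≤ ∫ y in (9/4 : ℝ)..(3:ℝ), hf y ^ 2 := by
  have hsplit := intervalIntegral.integral_add_adjacent_intervals
    (IIh2 (a := (9/4 : ℝ)) (b := (93/40 : ℝ)) (by norm_num) (by norm_num) (by norm_num))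
    (IIh2 (a := (93/40 : ℝ)) (b := (3:ℝ)) (by norm_num) (by norm_num) (by norm_num))
  linarith [L30, SL31, hsplit]
lemma SU29 : (∫ y in (87/40 : ℝ)..(3:ℝ), gf y ^ 2) ≤ (25251853/25000000000000000 : ℝ) := by
  have hsplit := intervalIntegral.integral_add_adjacent_intervals
    (IIg2 (a := (87/40 : ℝ)) (b := (9/4 : ℝ)) (by norm_num) (by norm_num) (by norm_num))
    (IIg2 (a := (9/4 : ℝ)) (b := (3:ℝ)) (by norm_num) (by norm_num) (by norm_num))
  linarith [U29, SU30, hsplit]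
lemma SL29 : ((9877263/2500000000000000 : ℝ)) ≤ ∫ y in (87/40 : ℝ)..(3:ℝ), hf y ^ 2 := by
  have hsplit := intervalIntegral.integral_add_adjacent_intervals
    (IIh2 (a := (87/40 : ℝ)) (b := (9/4 : ℝ)) (by norm_num) (by norm_num) (by norm_num))
    (IIh2 (a := (9/4 : ℝ)) (b := (3:ℝ)) (by norm_num) (by norm_num) (by norm_num))
  linarith [L29, SL30, hsplit]
lemma SU28 : (∫ y in (21/10 : ℝ)..(3:ℝ), gf y ^ 2) ≤ (34589103/25000000000000000 : ℝ) := by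
  have hsplit := intervalIntegral.integral_add_adjacent_intervals
    (IIg2 (a := (21/10 : ℝ)) (b := (87/40 : ℝ)) (by norm_num) (by norm_num) (by norm_num))
    (IIg2 (a := (87/40 : ℝ)) (b := (3:ℝ)) (by norm_num) (by norm_num) (by norm_num))
  linarith [U28, SU29, hsplit]
lemma SL28 : ((23797931/5000000000000000 : ℝ)) ≤ ∫ y in (21/10 : ℝ)..(3:ℝ), hf y ^ 2 := by
  have hsplit := intervalIntegral.integral_add_adjacent_intervals
    (IIh2 (a := (21/10 : ℝ)) (b := (87/40 : ℝ)) (by norm_num) (by norm_num) (by norm_num))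
    (IIh2 (a := (87/40 : ℝ)) (b := (3:ℝ)) (by norm_num) (by norm_num) (by norm_num))
  linarith [L28, SL29, hsplit]
lemma SU27 : (∫ y in (81/40 : ℝ)..(3:ℝ), gf y ^ 2) ≤ (46300003/25000000000000000 : ℝ) := by
  have hsplit := intervalIntegral.integral_add_adjacent_intervals
    (IIg2 (a := (81/40 : ℝ)) (b := (21/10 : ℝ)) (by norm_num) (by norm_num) (by norm_num))
    (IIg2 (a := (21/10 : ℝ)) (b := (3:ℝ)) (by norm_num) (by norm_num) (by norm_num))
  linarith [U27, SU28, hsplit]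
lemma SL27 : ((437319/78125000000000 : ℝ)) ≤ ∫ y in (81/40 : ℝ)..(3:ℝ), hf y ^ 2 := by
  have hsplit := intervalIntegral.integral_add_adjacent_intervals
    (IIh2 (a := (81/40 : ℝ)) (b := (21/10 : ℝ)) (by norm_num) (by norm_num) (by norm_num))
    (IIh2 (a := (21/10 : ℝ)) (b := (3:ℝ)) (by norm_num) (by norm_num) (by norm_num))
  linarith [L27, SL28, hsplit]
lemma SU26 : (∫ y in (39/20 : ℝ)..(3:ℝ), gf y ^ 2) ≤ (3791433/1562500000000000 : ℝ) := by
  have hsplit := intervalIntegral.integral_add_adjacent_intervals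
    (IIg2 (a := (39/20 : ℝ)) (b := (81/40 : ℝ)) (by norm_num) (by norm_num) (by norm_num))
    (IIg2 (a := (81/40 : ℝ)) (b := (3:ℝ)) (by norm_num) (by norm_num) (by norm_num))
  linarith [U26, SU27, hsplit]
lemma SL26 : ((32200421/5000000000000000 : ℝ)) ≤ ∫ y in (39/20 : ℝ)..(3:ℝ), hf y ^ 2 := by
  have hsplit := intervalIntegral.integral_add_adjacent_intervals
    (IIh2 (a := (39/20 : ℝ)) (b := (81/40 : ℝ)) (by norm_num) (by norm_num) (by norm_num))
    (IIh2 (a := (81/40 : ℝ)) (b := (3:ℝ)) (by norm_num) (by norm_num) (by norm_num))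
  linarith [L26, SL27, hsplit]
lemma SU25 : (∫ y in (15/8 : ℝ)..(3:ℝ), gf y ^ 2) ≤ (77907003/25000000000000000 : ℝ) := by
  have hsplit := intervalIntegral.integral_add_adjacent_intervals
    (IIg2 (a := (15/8 : ℝ)) (b := (39/20 : ℝ)) (by norm_num) (by norm_num) (by norm_num))
    (IIg2 (a := (39/20 : ℝ)) (b := (3:ℝ)) (by norm_num) (by norm_num) (by norm_num))
  linarith [U25, SU26, hsplit]
lemma SL25 : ((36286631/5000000000000000 : ℝ)) ≤ ∫ y in (15/8 : ℝ)..(3:ℝ), hf y ^ 2 := by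
  have hsplit := intervalIntegral.integral_add_adjacent_intervals
    (IIh2 (a := (15/8 : ℝ)) (b := (39/20 : ℝ)) (by norm_num) (by norm_num) (by norm_num))
    (IIh2 (a := (39/20 : ℝ)) (b := (3:ℝ)) (by norm_num) (by norm_num) (by norm_num))
  linarith [L25, SL26, hsplit]
lemma SU24 : (∫ y in (9/5 : ℝ)..(3:ℝ), gf y ^ 2) ≤ (24548757/6250000000000000 : ℝ) := by
  have hsplit := intervalIntegral.integral_add_adjacent_intervals
    (IIg2 (a := (9/5 : ℝ)) (b := (15/8 : ℝ)) (by norm_num) (by norm_num) (by norm_num))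
    (IIg2 (a := (15/8 : ℝ)) (b := (3:ℝ)) (by norm_num) (by norm_num) (by norm_num))
  linarith [U24, SU25, hsplit]
lemma SL24 : ((40108511/5000000000000000 : ℝ)) ≤ ∫ y in (9/5 : ℝ)..(3:ℝ), hf y ^ 2 := by
  have hsplit := intervalIntegral.integral_add_adjacent_intervals
    (IIh2 (a := (9/5 : ℝ)) (b := (15/8 : ℝ)) (by norm_num) (by norm_num) (by norm_num))
    (IIh2 (a := (15/8 : ℝ)) (b := (3:ℝ)) (by norm_num) (by norm_num) (by norm_num))
  linarith [L24, SL25, hsplit]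
lemma SU23 : (∫ y in (69/40 : ℝ)..(3:ℝ), gf y ^ 2) ≤ (30401507/6250000000000000 : ℝ) := by
  have hsplit := intervalIntegral.integral_add_adjacent_intervals
    (IIg2 (a := (69/40 : ℝ)) (b := (9/5 : ℝ)) (by norm_num) (by norm_num) (by norm_num))
    (IIg2 (a := (9/5 : ℝ)) (b := (3:ℝ)) (by norm_num) (by norm_num) (by norm_num))
  linarith [U23, SU24, hsplit]
lemma SL23 : ((10885059/1250000000000000 : ℝ)) ≤ ∫ y in (69/40 : ℝ)..(3:ℝ), hf y ^ 2 := by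
  have hsplit := intervalIntegral.integral_add_adjacent_intervals
    (IIh2 (a := (69/40 : ℝ)) (b := (9/5 : ℝ)) (by norm_num) (by norm_num) (by norm_num))
    (IIh2 (a := (9/5 : ℝ)) (b := (3:ℝ)) (by norm_num) (by norm_num) (by norm_num))
  linarith [L23, SL24, hsplit]
lemma SU22 : (∫ y in (33/20 : ℝ)..(3:ℝ), gf y ^ 2) ≤ (18515191/3125000000000000 : ℝ) := by
  have hsplit := intervalIntegral.integral_add_adjacent_intervals
    (IIg2 (a := (33/20 : ℝ)) (b := (69/40 : ℝ)) (by norm_num) (by norm_num) (by norm_num))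
    (IIg2 (a := (69/40 : ℝ)) (b := (3:ℝ)) (by norm_num) (by norm_num) (by norm_num))
  linarith [U22, SU23, hsplit]
lemma SL22 : ((11620049/1250000000000000 : ℝ)) ≤ ∫ y in (33/20 : ℝ)..(3:ℝ), hf y ^ 2 := by
  have hsplit := intervalIntegral.integral_add_adjacent_intervals
    (IIh2 (a := (33/20 : ℝ)) (b := (69/40 : ℝ)) (by norm_num) (by norm_num) (by norm_num))
    (IIh2 (a := (69/40 : ℝ)) (b := (3:ℝ)) (by norm_num) (by norm_num) (by norm_num))
  linarith [L22, SL23, hsplit]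
lemma SU21 : (∫ y in (63/40 : ℝ)..(3:ℝ), gf y ^ 2) ≤ (44403757/6250000000000000 : ℝ) := by
  have hsplit := intervalIntegral.integral_add_adjacent_intervals
    (IIg2 (a := (63/40 : ℝ)) (b := (33/20 : ℝ)) (by norm_num) (by norm_num) (by norm_num))
    (IIg2 (a := (33/20 : ℝ)) (b := (3:ℝ)) (by norm_num) (by norm_num) (by norm_num))
  linarith [U21, SU22, hsplit]
lemma SL21 : ((24430193/2500000000000000 : ℝ)) ≤ ∫ y in (63/40 : ℝ)..(3:ℝ), hf y ^ 2 := by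
  have hsplit := intervalIntegral.integral_add_adjacent_intervals
    (IIh2 (a := (63/40 : ℝ)) (b := (33/20 : ℝ)) (by norm_num) (by norm_num) (by norm_num))
    (IIh2 (a := (33/20 : ℝ)) (b := (3:ℝ)) (by norm_num) (by norm_num) (by norm_num))
  linarith [L21, SL22, hsplit]
lemma SU20 : (∫ y in (3/2 : ℝ)..(3:ℝ), gf y ^ 2) ≤ (104924139/12500000000000000 : ℝ) := by
  have hsplit := intervalIntegral.integral_add_adjacent_intervals
    (IIg2 (a := (3/2 : ℝ)) (b := (63/40 : ℝ)) (by norm_num) (by norm_num) (by norm_num))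
    (IIg2 (a := (63/40 : ℝ)) (b := (3:ℝ)) (by norm_num) (by norm_num) (by norm_num))
  linarith [U20, SU21, hsplit]
lemma SL20 : ((50644781/5000000000000000 : ℝ)) ≤ ∫ y in (3/2 : ℝ)..(3:ℝ), hf y ^ 2 := by
  have hsplit := intervalIntegral.integral_add_adjacent_intervals
    (IIh2 (a := (3/2 : ℝ)) (b := (63/40 : ℝ)) (by norm_num) (by norm_num) (by norm_num))
    (IIh2 (a := (63/40 : ℝ)) (b := (3:ℝ)) (by norm_num) (by norm_num) (by norm_num))
  linarith [L20, SL21, hsplit]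
lemma SU19 : (∫ y in (57/40 : ℝ)..(3:ℝ), gf y ^ 2) ≤ (122237389/12500000000000000 : ℝ) := by
  have hsplit := intervalIntegral.integral_add_adjacent_intervals
    (IIg2 (a := (57/40 : ℝ)) (b := (3/2 : ℝ)) (by norm_num) (by norm_num) (by norm_num))
    (IIg2 (a := (3/2 : ℝ)) (b := (3:ℝ)) (by norm_num) (by norm_num) (by norm_num))
  linarith [U19, SU20, hsplit]
lemma SL19 : ((25932113/2500000000000000 : ℝ)) ≤ ∫ y in (57/40 : ℝ)..(3:ℝ), hf y ^ 2 := by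
  have hsplit := intervalIntegral.integral_add_adjacent_intervals
    (IIh2 (a := (57/40 : ℝ)) (b := (3/2 : ℝ)) (by norm_num) (by norm_num) (by norm_num))
    (IIh2 (a := (3/2 : ℝ)) (b := (3:ℝ)) (by norm_num) (by norm_num) (by norm_num))
  linarith [L19, SL20, hsplit]
lemma SU18 : (∫ y in (27/20 : ℝ)..(3:ℝ), gf y ^ 2) ≤ (70260257/6250000000000000 : ℝ) := by
  have hsplit := intervalIntegral.integral_add_adjacent_intervals
    (IIg2 (a := (27/20 : ℝ)) (b := (57/40 : ℝ)) (by norm_num) (by norm_num) (by norm_num))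
    (IIg2 (a := (57/40 : ℝ)) (b := (3:ℝ)) (by norm_num) (by norm_num) (by norm_num))
  linarith [U18, SU19, hsplit]
lemma SL18 : ((52578141/5000000000000000 : ℝ)) ≤ ∫ y in (27/20 : ℝ)..(3:ℝ), hf y ^ 2 := by
  have hsplit := intervalIntegral.integral_add_adjacent_intervals
    (IIh2 (a := (27/20 : ℝ)) (b := (57/40 : ℝ)) (by norm_num) (by norm_num) (by norm_num))
    (IIh2 (a := (57/40 : ℝ)) (b := (3:ℝ)) (by norm_num) (by norm_num) (by norm_num))
  linarith [L18, SL19, hsplit]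
lemma SU17 : (∫ y in (51/40 : ℝ)..(3:ℝ), gf y ^ 2) ≤ (79751007/6250000000000000 : ℝ) := by
  have hsplit := intervalIntegral.integral_add_adjacent_intervals
    (IIg2 (a := (51/40 : ℝ)) (b := (27/20 : ℝ)) (by norm_num) (by norm_num) (by norm_num))
    (IIg2 (a := (27/20 : ℝ)) (b := (3:ℝ)) (by norm_num) (by norm_num) (by norm_num))
  linarith [U17, SU18, hsplit]
lemma SL17 : ((6611983/625000000000000 : ℝ)) ≤ ∫ y in (51/40 : ℝ)..(3:ℝ), hf y ^ 2 := by
  have hsplit := intervalIntegral.integral_add_adjacent_intervals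
    (IIh2 (a := (51/40 : ℝ)) (b := (27/20 : ℝ)) (by norm_num) (by norm_num) (by norm_num))
    (IIh2 (a := (27/20 : ℝ)) (b := (3:ℝ)) (by norm_num) (by norm_num) (by norm_num))
  linarith [L17, SL18, hsplit]
lemma SU16 : (∫ y in (6/5 : ℝ)..(3:ℝ), gf y ^ 2) ≤ (22359283/1562500000000000 : ℝ) := by
  have hsplit := intervalIntegral.integral_add_adjacent_intervals
    (IIg2 (a := (6/5 : ℝ)) (b := (51/40 : ℝ)) (by norm_num) (by norm_num) (by norm_num))
    (IIg2 (a := (51/40 : ℝ)) (b := (3:ℝ)) (by norm_num) (by norm_num) (by norm_num))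
  linarith [U16, SU17, hsplit]
lemma SL16 : ((52965709/5000000000000000 : ℝ)) ≤ ∫ y in (6/5 : ℝ)..(3:ℝ), hf y ^ 2 := by
  have hsplit := intervalIntegral.integral_add_adjacent_intervals
    (IIh2 (a := (6/5 : ℝ)) (b := (51/40 : ℝ)) (by norm_num) (by norm_num) (by norm_num))
    (IIh2 (a := (51/40 : ℝ)) (b := (3:ℝ)) (by norm_num) (by norm_num) (by norm_num))
  linarith [L16, SL17, hsplit]
lemma SU15 : (∫ y in (9/8 : ℝ)..(3:ℝ), gf y ^ 2) ≤ (12394079/781250000000000 : ℝ) := by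
  have hsplit := intervalIntegral.integral_add_adjacent_intervals
    (IIg2 (a := (9/8 : ℝ)) (b := (6/5 : ℝ)) (by norm_num) (by norm_num) (by norm_num))
    (IIg2 (a := (6/5 : ℝ)) (b := (3:ℝ)) (by norm_num) (by norm_num) (by norm_num))
  linarith [U15, SU16, hsplit]
lemma SL15 : ((10593495093/1000000000000000000 : ℝ)) ≤ ∫ y in (9/8 : ℝ)..(3:ℝ), hf y ^ 2 := by
  have hsplit := intervalIntegral.integral_add_adjacent_intervals
    (IIh2 (a := (9/8 : ℝ)) (b := (6/5 : ℝ)) (by norm_num) (by norm_num) (by norm_num))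
    (IIh2 (a := (6/5 : ℝ)) (b := (3:ℝ)) (by norm_num) (by norm_num) (by norm_num))
  linarith [L15, SL16, hsplit]
lemma SU14 : (∫ y in (21/20 : ℝ)..(3:ℝ), gf y ^ 2) ≤ (217451139/12500000000000000 : ℝ) := by
  have hsplit := intervalIntegral.integral_add_adjacent_intervals
    (IIg2 (a := (21/20 : ℝ)) (b := (9/8 : ℝ)) (by norm_num) (by norm_num) (by norm_num))
    (IIg2 (a := (9/8 : ℝ)) (b := (3:ℝ)) (by norm_num) (by norm_num) (by norm_num))
  linarith [U14, SU15, hsplit]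
lemma SL14 : ((10620198193/1000000000000000000 : ℝ)) ≤ ∫ y in (21/20 : ℝ)..(3:ℝ), hf y ^ 2 := by
  have hsplit := intervalIntegral.integral_add_adjacent_intervals
    (IIh2 (a := (21/20 : ℝ)) (b := (9/8 : ℝ)) (by norm_num) (by norm_num) (by norm_num))
    (IIh2 (a := (9/8 : ℝ)) (b := (3:ℝ)) (by norm_num) (by norm_num) (by norm_num))
  linarith [L14, SL15, hsplit]
lemma SU13 : (∫ y in (39/40 : ℝ)..(3:ℝ), gf y ^ 2) ≤ (58992691/3125000000000000 : ℝ) := by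
  have hsplit := intervalIntegral.integral_add_adjacent_intervals
    (IIg2 (a := (39/40 : ℝ)) (b := (21/20 : ℝ)) (by norm_num) (by norm_num) (by norm_num))
    (IIg2 (a := (21/20 : ℝ)) (b := (3:ℝ)) (by norm_num) (by norm_num) (by norm_num))
  linarith [U13, SU14, hsplit]
lemma SL13 : ((10716379993/1000000000000000000 : ℝ)) ≤ ∫ y in (39/40 : ℝ)..(3:ℝ), hf y ^ 2 := by
  have hsplit := intervalIntegral.integral_add_adjacent_intervals
    (IIh2 (a := (39/40 : ℝ)) (b := (21/20 : ℝ)) (by norm_num) (by norm_num) (by norm_num))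
    (IIh2 (a := (21/20 : ℝ)) (b := (3:ℝ)) (by norm_num) (by norm_num) (by norm_num))
  linarith [L13, SL14, hsplit]
lemma SU12 : (∫ y in (9/10 : ℝ)..(3:ℝ), gf y ^ 2) ≤ (253539639/12500000000000000 : ℝ) := by
  have hsplit := intervalIntegral.integral_add_adjacent_intervals
    (IIg2 (a := (9/10 : ℝ)) (b := (39/40 : ℝ)) (by norm_num) (by norm_num) (by norm_num))
    (IIg2 (a := (39/40 : ℝ)) (b := (3:ℝ)) (by norm_num) (by norm_num) (by norm_num))
  linarith [U12, SU13, hsplit]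
lemma SL12 : ((10925168993/1000000000000000000 : ℝ)) ≤ ∫ y in (9/10 : ℝ)..(3:ℝ), hf y ^ 2 := by
  have hsplit := intervalIntegral.integral_add_adjacent_intervals
    (IIh2 (a := (9/10 : ℝ)) (b := (39/40 : ℝ)) (by norm_num) (by norm_num) (by norm_num))
    (IIh2 (a := (39/40 : ℝ)) (b := (3:ℝ)) (by norm_num) (by norm_num) (by norm_num))
  linarith [L12, SL13, hsplit]
lemma SU11 : (∫ y in (33/40 : ℝ)..(3:ℝ), gf y ^ 2) ≤ (269864389/12500000000000000 : ℝ) := by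
  have hsplit := intervalIntegral.integral_add_adjacent_intervals
    (IIg2 (a := (33/40 : ℝ)) (b := (9/10 : ℝ)) (by norm_num) (by norm_num) (by norm_num))
    (IIg2 (a := (9/10 : ℝ)) (b := (3:ℝ)) (by norm_num) (by norm_num) (by norm_num))
  linarith [U11, SU12, hsplit]
lemma SL11 : ((11287285993/1000000000000000000 : ℝ)) ≤ ∫ y in (33/40 : ℝ)..(3:ℝ), hf y ^ 2 := by
  have hsplit := intervalIntegral.integral_add_adjacent_intervals
    (IIh2 (a := (33/40 : ℝ)) (b := (9/10 : ℝ)) (by norm_num) (by norm_num) (by norm_num))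
    (IIh2 (a := (9/10 : ℝ)) (b := (3:ℝ)) (by norm_num) (by norm_num) (by norm_num))
  linarith [L11, SL12, hsplit]
lemma SU10 : (∫ y in (3/4 : ℝ)..(3:ℝ), gf y ^ 2) ≤ (284695139/12500000000000000 : ℝ) := by
  have hsplit := intervalIntegral.integral_add_adjacent_intervals
    (IIg2 (a := (3/4 : ℝ)) (b := (33/40 : ℝ)) (by norm_num) (by norm_num) (by norm_num))
    (IIg2 (a := (33/40 : ℝ)) (b := (3:ℝ)) (by norm_num) (by norm_num) (by norm_num))
  linarith [U10, SU11, hsplit]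
lemma SL10 : ((11838740993/1000000000000000000 : ℝ)) ≤ ∫ y in (3/4 : ℝ)..(3:ℝ), hf y ^ 2 := by
  have hsplit := intervalIntegral.integral_add_adjacent_intervals
    (IIh2 (a := (3/4 : ℝ)) (b := (33/40 : ℝ)) (by norm_num) (by norm_num) (by norm_num))
    (IIh2 (a := (33/40 : ℝ)) (b := (3:ℝ)) (by norm_num) (by norm_num) (by norm_num))
  linarith [L10, SL11, hsplit]
lemma SU9 : (∫ y in (27/40 : ℝ)..(3:ℝ), gf y ^ 2) ≤ (74459191/3125000000000000 : ℝ) := by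
  have hsplit := intervalIntegral.integral_add_adjacent_intervals
    (IIg2 (a := (27/40 : ℝ)) (b := (3/4 : ℝ)) (by norm_num) (by norm_num) (by norm_num))
    (IIg2 (a := (3/4 : ℝ)) (b := (3:ℝ)) (by norm_num) (by norm_num) (by norm_num))
  linarith [U9, SU10, hsplit]
lemma SL9 : ((12608766993/1000000000000000000 : ℝ)) ≤ ∫ y in (27/40 : ℝ)..(3:ℝ), hf y ^ 2 := by
  have hsplit := intervalIntegral.integral_add_adjacent_intervals
    (IIh2 (a := (27/40 : ℝ)) (b := (3/4 : ℝ)) (by norm_num) (by norm_num) (by norm_num))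
    (IIh2 (a := (3/4 : ℝ)) (b := (3:ℝ)) (by norm_num) (by norm_num) (by norm_num))
  linarith [L9, SL10, hsplit]
lemma SU8 : (∫ y in (3/5 : ℝ)..(3:ℝ), gf y ^ 2) ≤ (618315553/25000000000000000 : ℝ) := by
  have hsplit := intervalIntegral.integral_add_adjacent_intervals
    (IIg2 (a := (3/5 : ℝ)) (b := (27/40 : ℝ)) (by norm_num) (by norm_num) (by norm_num))
    (IIg2 (a := (27/40 : ℝ)) (b := (3:ℝ)) (by norm_num) (by norm_num) (by norm_num))
  linarith [U8, SU9, hsplit]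
lemma SL8 : ((13618096993/1000000000000000000 : ℝ)) ≤ ∫ y in (3/5 : ℝ)..(3:ℝ), hf y ^ 2 := by
  have hsplit := intervalIntegral.integral_add_adjacent_intervals
    (IIh2 (a := (3/5 : ℝ)) (b := (27/40 : ℝ)) (by norm_num) (by norm_num) (by norm_num))
    (IIh2 (a := (27/40 : ℝ)) (b := (3:ℝ)) (by norm_num) (by norm_num) (by norm_num))
  linarith [L8, SL9, hsplit]
lemma SU7 : (∫ y in (21/40 : ℝ)..(3:ℝ), gf y ^ 2) ≤ (637192403/25000000000000000 : ℝ) := by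
  have hsplit := intervalIntegral.integral_add_adjacent_intervals
    (IIg2 (a := (21/40 : ℝ)) (b := (3/5 : ℝ)) (by norm_num) (by norm_num) (by norm_num))
    (IIg2 (a := (3/5 : ℝ)) (b := (3:ℝ)) (by norm_num) (by norm_num) (by norm_num))
  linarith [U7, SU8, hsplit]
lemma SL7 : ((14877686993/1000000000000000000 : ℝ)) ≤ ∫ y in (21/40 : ℝ)..(3:ℝ), hf y ^ 2 := by
  have hsplit := intervalIntegral.integral_add_adjacent_intervals
    (IIh2 (a := (21/40 : ℝ)) (b := (3/5 : ℝ)) (by norm_num) (by norm_num) (by norm_num))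
    (IIh2 (a := (3/5 : ℝ)) (b := (3:ℝ)) (by norm_num) (by norm_num) (by norm_num))
  linarith [L7, SL8, hsplit]
lemma SU6 : (∫ y in (9/20 : ℝ)..(3:ℝ), gf y ^ 2) ≤ (81540591/3125000000000000 : ℝ) := by
  have hsplit := intervalIntegral.integral_add_adjacent_intervals
    (IIg2 (a := (9/20 : ℝ)) (b := (21/40 : ℝ)) (by norm_num) (by norm_num) (by norm_num))
    (IIg2 (a := (21/40 : ℝ)) (b := (3:ℝ)) (by norm_num) (by norm_num) (by norm_num))
  linarith [U6, SU7, hsplit]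
lemma SL6 : ((16387916993/1000000000000000000 : ℝ)) ≤ ∫ y in (9/20 : ℝ)..(3:ℝ), hf y ^ 2 := by
  have hsplit := intervalIntegral.integral_add_adjacent_intervals
    (IIh2 (a := (9/20 : ℝ)) (b := (21/40 : ℝ)) (by norm_num) (by norm_num) (by norm_num))
    (IIh2 (a := (21/40 : ℝ)) (b := (3:ℝ)) (by norm_num) (by norm_num) (by norm_num))
  linarith [L6, SL7, hsplit]
lemma SU5 : (∫ y in (3/8 : ℝ)..(3:ℝ), gf y ^ 2) ≤ (663877253/25000000000000000 : ℝ) := by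
  have hsplit := intervalIntegral.integral_add_adjacent_intervals
    (IIg2 (a := (3/8 : ℝ)) (b := (9/20 : ℝ)) (by norm_num) (by norm_num) (by norm_num))
    (IIg2 (a := (9/20 : ℝ)) (b := (3:ℝ)) (by norm_num) (by norm_num) (by norm_num))
  linarith [U5, SU6, hsplit]
lemma SL5 : ((18138336993/1000000000000000000 : ℝ)) ≤ ∫ y in (3/8 : ℝ)..(3:ℝ), hf y ^ 2 := by
  have hsplit := intervalIntegral.integral_add_adjacent_intervals
    (IIh2 (a := (3/8 : ℝ)) (b := (9/20 : ℝ)) (by norm_num) (by norm_num) (by norm_num))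
    (IIh2 (a := (9/20 : ℝ)) (b := (3:ℝ)) (by norm_num) (by norm_num) (by norm_num))
  linarith [L5, SL6, hsplit]
lemma SU4 : (∫ y in (3/10 : ℝ)..(3:ℝ), gf y ^ 2) ≤ (672151653/25000000000000000 : ℝ) := by
  have hsplit := intervalIntegral.integral_add_adjacent_intervals
    (IIg2 (a := (3/10 : ℝ)) (b := (3/8 : ℝ)) (by norm_num) (by norm_num) (by norm_num))
    (IIg2 (a := (3/8 : ℝ)) (b := (3:ℝ)) (by norm_num) (by norm_num) (by norm_num))
  linarith [U4, SU5, hsplit]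
lemma SL4 : ((20107976993/1000000000000000000 : ℝ)) ≤ ∫ y in (3/10 : ℝ)..(3:ℝ), hf y ^ 2 := by
  have hsplit := intervalIntegral.integral_add_adjacent_intervals
    (IIh2 (a := (3/10 : ℝ)) (b := (3/8 : ℝ)) (by norm_num) (by norm_num) (by norm_num))
    (IIh2 (a := (3/8 : ℝ)) (b := (3:ℝ)) (by norm_num) (by norm_num) (by norm_num))
  linarith [L4, SL5, hsplit]
lemma SU3 : (∫ y in (9/40 : ℝ)..(3:ℝ), gf y ^ 2) ≤ (677573403/25000000000000000 : ℝ) := by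
  have hsplit := intervalIntegral.integral_add_adjacent_intervals
    (IIg2 (a := (9/40 : ℝ)) (b := (3/10 : ℝ)) (by norm_num) (by norm_num) (by norm_num))
    (IIg2 (a := (3/10 : ℝ)) (b := (3:ℝ)) (by norm_num) (by norm_num) (by norm_num))
  linarith [U3, SU4, hsplit]
lemma SL3 : ((22266146993/1000000000000000000 : ℝ)) ≤ ∫ y in (9/40 : ℝ)..(3:ℝ), hf y ^ 2 := by
  have hsplit := intervalIntegral.integral_add_adjacent_intervals
    (IIh2 (a := (9/40 : ℝ)) (b := (3/10 : ℝ)) (by norm_num) (by norm_num) (by norm_num))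
    (IIh2 (a := (3/10 : ℝ)) (b := (3:ℝ)) (by norm_num) (by norm_num) (by norm_num))
  linarith [L3, SL4, hsplit]
lemma SU2 : (∫ y in (3/20 : ℝ)..(3:ℝ), gf y ^ 2) ≤ (680673103/25000000000000000 : ℝ) := by
  have hsplit := intervalIntegral.integral_add_adjacent_intervals
    (IIg2 (a := (3/20 : ℝ)) (b := (9/40 : ℝ)) (by norm_num) (by norm_num) (by norm_num))
    (IIg2 (a := (9/40 : ℝ)) (b := (3:ℝ)) (by norm_num) (by norm_num) (by norm_num))
  linarith [U2, SU3, hsplit]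
lemma SL2 : ((24573746993/1000000000000000000 : ℝ)) ≤ ∫ y in (3/20 : ℝ)..(3:ℝ), hf y ^ 2 := by
  have hsplit := intervalIntegral.integral_add_adjacent_intervals
    (IIh2 (a := (3/20 : ℝ)) (b := (9/40 : ℝ)) (by norm_num) (by norm_num) (by norm_num))
    (IIh2 (a := (9/40 : ℝ)) (b := (3:ℝ)) (by norm_num) (by norm_num) (by norm_num))
  linarith [L2, SL3, hsplit]
lemma SU1 : (∫ y in (3/40 : ℝ)..(3:ℝ), gf y ^ 2) ≤ (1364126421/50000000000000000 : ℝ) := by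
  have hsplit := intervalIntegral.integral_add_adjacent_intervals
    (IIg2 (a := (3/40 : ℝ)) (b := (3/20 : ℝ)) (by norm_num) (by norm_num) (by norm_num))
    (IIg2 (a := (3/20 : ℝ)) (b := (3:ℝ)) (by norm_num) (by norm_num) (by norm_num))
  linarith [U1, SU2, hsplit]
lemma SL1 : ((26984956993/1000000000000000000 : ℝ)) ≤ ∫ y in (3/40 : ℝ)..(3:ℝ), hf y ^ 2 := by
  have hsplit := intervalIntegral.integral_add_adjacent_intervals
    (IIh2 (a := (3/40 : ℝ)) (b := (3/20 : ℝ)) (by norm_num) (by norm_num) (by norm_num))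
    (IIh2 (a := (3/20 : ℝ)) (b := (3:ℝ)) (by norm_num) (by norm_num) (by norm_num))
  linarith [L1, SL2, hsplit]
lemma SU0 : (∫ y in (0 : ℝ)..(3:ℝ), gf y ^ 2) ≤ (682411363/25000000000000000 : ℝ) := by
  have hsplit := intervalIntegral.integral_add_adjacent_intervals
    (IIg2 (a := (0 : ℝ)) (b := (3/40 : ℝ)) (by norm_num) (by norm_num) (by norm_num))
    (IIg2 (a := (3/40 : ℝ)) (b := (3:ℝ)) (by norm_num) (by norm_num) (by norm_num))
  linarith [U0, SU1, hsplit]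
lemma SL0 : ((29449306993/1000000000000000000 : ℝ)) ≤ ∫ y in (0 : ℝ)..(3:ℝ), hf y ^ 2 := by
  have hsplit := intervalIntegral.integral_add_adjacent_intervals
    (IIh2 (a := (0 : ℝ)) (b := (3/40 : ℝ)) (by norm_num) (by norm_num) (by norm_num))
    (IIh2 (a := (3/40 : ℝ)) (b := (3:ℝ)) (by norm_num) (by norm_num) (by norm_num))
  linarith [L0, SL1, hsplit]
lemma hU3 : (∫ y in (0:ℝ)..3, gf y ^ 2) ≤ 0.0000000276 := le_trans SU0 (by norm_num)
lemma hL3 : (0.0000000293:ℝ) ≤ ∫ y in (0:ℝ)..3, hf y ^ 2 := le_trans (by norm_num) SL0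

open MeasureTheory intervalIntegral

lemma IIB : IntervalIntegrable (fun y => 1 + gf y ^ 2 / 2 - hf y ^ 2 / (2 * 1.00001)) volume (-5) 5 := by
  apply II (f := fun y => 1 + gf y ^ 2 / 2 - hf y ^ 2 / (2 * 1.00001)) ?_ (by norm_num) (C := 3)
  · intro y hy
    have hmem : y ∈ Set.Icc (-5:ℝ) 5 := ⟨by linarith [hy.1], by linarith [hy.2]⟩
    have hG : gf y ^ 2 ≤ 0.000001 := le_trans (gsq_global y hmem) numeric_G
    have hH : hf y ^ 2 ≤ 0.0001 := le_trans (hsq_global y hmem) numeric_H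
    have hG0 : (0:ℝ) ≤ gf y ^ 2 := sq_nonneg _
    have hH0 : (0:ℝ) ≤ hf y ^ 2 := sq_nonneg _
    have hHd0 : (0:ℝ) ≤ hf y ^ 2 / (2 * 1.00001) := by positivity
    have hHd1 : hf y ^ 2 / (2 * 1.00001) ≤ hf y ^ 2 := by
      apply div_le_self hH0 (by norm_num)
    rw [abs_le]
    constructor <;> linarith
  · exact (measurable_const.add ((measgf.pow_const 2).div_const 2)).sub
      ((meashf.pow_const 2).div_const (2 * 1.00001))

lemma intB : (∫ y in (-5:ℝ)..5, (1 + gf y ^ 2 / 2 - hf y ^ 2 / (2 * 1.00001)))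
    = 10 + (∫ y in (-5:ℝ)..5, gf y ^ 2) / 2 - (∫ y in (-5:ℝ)..5, hf y ^ 2) / (2 * 1.00001) := by
  have hg := IIg2 (le_refl (-5:ℝ)) (by norm_num : (-5:ℝ) ≤ 5) (le_refl (5:ℝ))
  have hh := IIh2 (le_refl (-5:ℝ)) (by norm_num : (-5:ℝ) ≤ 5) (le_refl (5:ℝ))
  rw [intervalIntegral.integral_sub (intervalIntegrable_const.add (hg.div_const 2)) (hh.div_const (2 * 1.00001)),
      intervalIntegral.integral_add intervalIntegrable_const (hg.div_const 2),
      intervalIntegral.integral_div, intervalIntegral.integral_div,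
      intervalIntegral.integral_const]
  norm_num

lemma Asym : (∫ y in (-5:ℝ)..0, gf y ^ 2) = ∫ y in (0:ℝ)..5, gf y ^ 2 := by
  have h := intervalIntegral.integral_comp_neg (a := (0:ℝ)) (b := 5) (f := fun y => gf y ^ 2)
  simp only [gf_neg, neg_sq, neg_zero] at h
  exact h.symm

lemma Hsym : (∫ y in (-5:ℝ)..0, hf y ^ 2) = ∫ y in (0:ℝ)..5, hf y ^ 2 := by
  have h := intervalIntegral.integral_comp_neg (a := (0:ℝ)) (b := 5) (f := fun y => hf y ^ 2)
  simp only [hf_neg, neg_zero] at h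
  exact h.symm

lemma exp31 : Real.exp (-(125/4 : ℝ)) ≤ 0.000000000000027 := by
  exact (epb 31 (125/4) (1/4) 0 0.000000000000027 (by norm_num) (by norm_num) (by norm_num)
    (by norm_num) (by norm_num) (by norm_num)).2

lemma hTail : (∫ y in (3:ℝ)..5, gf y ^ 2) ≤ 0.00000000013 := by
  calc (∫ y in (3:ℝ)..5, gf y ^ 2)
      ≤ ∫ _ in (3:ℝ)..5, 2385 * Real.exp (-(125/4:ℝ)) := by
        apply intervalIntegral.integral_mono_on (by norm_num)
          (IIg2 (by norm_num) (by norm_num) (by norm_num)) intervalIntegrable_const tail_ptw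
    _ = 2 * (2385 * Real.exp (-(125/4:ℝ))) := by
        rw [intervalIntegral.integral_const, smul_eq_mul]; norm_num
    _ ≤ 0.00000000013 := by nlinarith [exp31, Real.exp_pos (-(125/4:ℝ))]

/-- The bump deformation strictly decreases the truncated four-derivative
gravitational entropy ∫ √(1 + f′²)(1 − f″²/(2(1 + f′²)³)) of the straight line
over [−5, 5], whose undeformed value is 10. -/
theorem bump_decreases_truncated_entropy :
    (∫ y in (-5 : ℝ)..5,
        Real.sqrt (1 + (deriv bump y) ^ 2) *
          (1 - (deriv (deriv bump) y) ^ 2 /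
            (2 * (1 + (deriv bump y) ^ 2) ^ 3))) < 10 := by
  rw [Sconv]
  have hA : (∫ y in (-5:ℝ)..5, gf y ^ 2) ≤ 2 * (0.0000000276 + 0.00000000013) := by
    have hs1 : (∫ y in (-5:ℝ)..0, gf y ^ 2) + (∫ y in (0:ℝ)..5, gf y ^ 2)
        = ∫ y in (-5:ℝ)..5, gf y ^ 2 :=
      intervalIntegral.integral_add_adjacent_intervals
        (IIg2 (by norm_num) (by norm_num) (by norm_num)) (IIg2 (by norm_num) (by norm_num) (by norm_num))
    have hs2 : (∫ y in (0:ℝ)..3, gf y ^ 2) + (∫ y in (3:ℝ)..5, gf y ^ 2)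
        = ∫ y in (0:ℝ)..5, gf y ^ 2 :=
      intervalIntegral.integral_add_adjacent_intervals
        (IIg2 (by norm_num) (by norm_num) (by norm_num)) (IIg2 (by norm_num) (by norm_num) (by norm_num))
    rw [← hs1, Asym, ← hs2]
    linarith [hU3, hTail]
  have hB : 2 * (0.0000000293:ℝ) ≤ ∫ y in (-5:ℝ)..5, hf y ^ 2 := by
    have hs1 : (∫ y in (-5:ℝ)..0, hf y ^ 2) + (∫ y in (0:ℝ)..5, hf y ^ 2)
        = ∫ y in (-5:ℝ)..5, hf y ^ 2 :=
      intervalIntegral.integral_add_adjacent_intervals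
        (IIh2 (by norm_num) (by norm_num) (by norm_num)) (IIh2 (by norm_num) (by norm_num) (by norm_num))
    have hs2 : (∫ y in (0:ℝ)..3, hf y ^ 2) + (∫ y in (3:ℝ)..5, hf y ^ 2)
        = ∫ y in (0:ℝ)..5, hf y ^ 2 :=
      intervalIntegral.integral_add_adjacent_intervals
        (IIh2 (by norm_num) (by norm_num) (by norm_num)) (IIh2 (by norm_num) (by norm_num) (by norm_num))
    have htl : (0:ℝ) ≤ ∫ y in (3:ℝ)..5, hf y ^ 2 :=
      intervalIntegral.integral_nonneg (by norm_num) (fun y _ => sq_nonneg _)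
    rw [← hs1, Hsym, ← hs2]
    linarith [hL3]
  calc (∫ y in (-5:ℝ)..5, Fe y)
      ≤ ∫ y in (-5:ℝ)..5, (1 + gf y ^ 2 / 2 - hf y ^ 2 / (2 * 1.00001)) := by
        apply intervalIntegral.integral_mono_on (by norm_num) IIFe IIB ptFeB
    _ = 10 + (∫ y in (-5:ℝ)..5, gf y ^ 2) / 2 - (∫ y in (-5:ℝ)..5, hf y ^ 2) / (2 * 1.00001) := intB
    _ < 10 := by
        rw [show ((2 : ℝ) * 1.00001) = 2.00002 by norm_num]
        have hc : (2:ℝ) * (0.0000000276 + 0.00000000013) / 2 - 2 * 0.0000000293 / 2.00002 < 0 := by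
          norm_num
        have h1 : (∫ y in (-5:ℝ)..5, gf y ^ 2) / 2 ≤ 2 * (0.0000000276 + 0.00000000013) / 2 := by
          linarith [hA]
        have h2 : 2 * (0.0000000293:ℝ) / 2.00002 ≤ (∫ y in (-5:ℝ)..5, hf y ^ 2) / 2.00002 := by
          gcongr
        linarith
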